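/- arXiv:1911.01336 — 10 statements merged into one kernel-verified Lean document; each statement's English description precedes it below -/
import Mathlib

section
/- Rosenthal's lemma: Let M = (m_{k,n})_{k,n∈ℕ} be a Rosenthal matrix. Then for every ε > 0 and every infinite set B ⊆ ℕ there is an infinite set A ⊆ B such that M is ε-fragmented by A, i.e., for every k ∈ A one has Σ_{n ∈ A \ {k}} m_{k,n} ≤ ε. -/
/-- A *Rosenthal matrix* is a matrix `M = (m_{k,n})` of non-negative reals whose rows are
summable and such that `‖M‖_∞ = sup_k Σ_n m_{k,n}` is finite. -/
def IsRosenthalMatrix (M : ℕ → ℕ → ℝ) : Prop :=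
  (∀ k n, 0 ≤ M k n) ∧ (∀ k, Summable (M k)) ∧
    BddAbove (Set.range fun k => ∑' n, M k n)

/-- `M` is `ε`-fragmented by `A`: for every `k ∈ A`, `Σ_{n ∈ A \ {k}} m_{k,n} ≤ ε`. -/
def Fragments (M : ℕ → ℕ → ℝ) (ε : ℝ) (A : Set ℕ) : Prop :=
  ∀ k ∈ A, ∑' n : (A \ {k} : Set ℕ), M k ↑n ≤ ε

open Set

noncomputable def rowSum (M : ℕ → ℕ → ℝ) (k : ℕ) (A : Set ℕ) : ℝ :=
  ∑' n, (A \ {k}).indicator (M k) n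

lemma rowSum_eq (M : ℕ → ℕ → ℝ) (k : ℕ) (A : Set ℕ) :
    (∑' n : (A \ {k} : Set ℕ), M k ↑n) = rowSum M k A := by
  rw [rowSum, tsum_subtype]

variable {M : ℕ → ℕ → ℝ}

lemma rowSum_nonneg (h0 : ∀ k n, 0 ≤ M k n) (k : ℕ) (A : Set ℕ) : 0 ≤ rowSum M k A :=
  tsum_nonneg fun n => Set.indicator_nonneg (fun n _ => h0 k n) n

lemma rowSum_mono (h0 : ∀ k n, 0 ≤ M k n) (hs : ∀ k, Summable (M k)) (k : ℕ) {A B : Set ℕ} (hAB : A ⊆ B) :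
    rowSum M k A ≤ rowSum M k B := by
  refine Summable.tsum_le_tsum (fun n => ?_) ((hs k).indicator _) ((hs k).indicator _)
  exact Set.indicator_le_indicator_of_subset (Set.diff_subset_diff_left hAB)
    (fun n => h0 k n) n

lemma rowSum_le_tsum (h0 : ∀ k n, 0 ≤ M k n) (hs : ∀ k, Summable (M k)) (k : ℕ) (A : Set ℕ) : rowSum M k A ≤ ∑' n, M k n := by
  refine Summable.tsum_le_tsum (fun n => ?_) ((hs k).indicator _) (hs k)
  exact Set.indicator_le_self' (fun n _ => h0 k n) n

/-- key splitting inequality: if `W ⊆ D \ {k}`, `D' ⊆ D`, and `W` is disjoint from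
`D' \ {k}`, then `rowSum k D' + Σ_W ≤ rowSum k D`. -/
lemma rowSum_split (h0 : ∀ k n, 0 ≤ M k n) (hs : ∀ k, Summable (M k)) (k : ℕ) {W D D' : Set ℕ} (hW : W ⊆ D \ {k}) (hD' : D' ⊆ D)
    (hdisj : Disjoint W (D' \ {k})) :
    rowSum M k D' + (∑' n, W.indicator (M k) n) ≤ rowSum M k D := by
  have hsum := ((hs k).indicator (D' \ {k})).add ((hs k).indicator W)
  rw [rowSum, ← Summable.tsum_add ((hs k).indicator _) ((hs k).indicator _)]
  refine Summable.tsum_le_tsum (fun n => ?_) hsum ((hs k).indicator _)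
  by_cases hn1 : n ∈ D' \ {k}
  · have hn2 : n ∉ W := fun hw => (hdisj.ne_of_mem hw hn1) rfl
    have hn3 : n ∈ D \ {k} := ⟨hD' hn1.1, hn1.2⟩
    simp [Set.indicator_of_mem hn1, Set.indicator_of_notMem hn2,
      Set.indicator_of_mem hn3]
  · by_cases hn2 : n ∈ W
    · have hn3 : n ∈ D \ {k} := hW hn2
      simp [Set.indicator_of_notMem hn1, Set.indicator_of_mem hn2,
        Set.indicator_of_mem hn3]
    · simp [Set.indicator_of_notMem hn1, Set.indicator_of_notMem hn2,
        Set.indicator_nonneg (fun n _ => h0 k n) n]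

/-- The single step: if no infinite fragmented subset exists inside `D`, we can pass to
an infinite `D' ⊆ D` on which every row loses at least `ε` of mass. -/
lemma rosenthal_step (h0 : ∀ k n, 0 ≤ M k n) (hs : ∀ k, Summable (M k)) {ε : ℝ} (hε : 0 < ε) {D : Set ℕ} (hD : D.Infinite)
    (hno : ¬ ∃ A ⊆ D, A.Infinite ∧ Fragments M ε A) :
    ∃ D' ⊆ D, D'.Infinite ∧ ∀ k ∈ D', rowSum M k D' + ε ≤ rowSum M k D := by
  haveI := hD.to_subtype
  obtain ⟨e⟩ : Nonempty (ℕ × ℕ ≃ D) := nonempty_equiv_of_countable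
  set Pt : ℕ → Set ℕ := fun j => Set.range fun i => ((e (j, i) : D) : ℕ) with hPt
  have hPtD : ∀ j, Pt j ⊆ D := by
    rintro j x ⟨i, rfl⟩; exact (e (j, i)).2
  have hPtinj : ∀ j j' i i', ((e (j, i) : D) : ℕ) = ((e (j', i') : D) : ℕ) →
      (j, i) = (j', i') := by
    intro j j' i i' h
    exact e.injective (Subtype.ext h)
  have hPtInf : ∀ j, (Pt j).Infinite := by
    intro j
    apply Set.infinite_range_of_injective
    intro i i' h
    simpa using hPtinj j j i i' h
  have hPtdisj : ∀ j j', j ≠ j' → ∀ x, x ∈ Pt j → x ∈ Pt j' → False := by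
    rintro j j' hjj' x ⟨i, rfl⟩ ⟨i', hx⟩
    exact hjj' ((Prod.mk.injEq _ _ _ _).mp (hPtinj j' j i' i hx)).1.symm
  -- the "good" points of each piece
  set S : ℕ → Set ℕ := fun j => {k ∈ Pt j | rowSum M k (Pt j) ≤ ε} with hS
  have hSfin : ∀ j, (S j).Finite := by
    by_contra hf
    push_neg at hf
    obtain ⟨j, hj⟩ := hf
    refine hno ⟨S j, fun x hx => hPtD j hx.1, hj, ?_⟩
    intro k hk
    rw [rowSum_eq]
    calc rowSum M k (S j) ≤ rowSum M k (Pt j) :=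
          rowSum_mono h0 hs k (fun x hx => hx.1)
      _ ≤ ε := hk.2
  -- in each piece pick a bad point
  have hbad : ∀ j, ∃ k, k ∈ Pt j ∧ ε < rowSum M k (Pt j) := by
    intro j
    obtain ⟨k, hk⟩ := ((hPtInf j).diff (hSfin j)).nonempty
    refine ⟨k, hk.1, ?_⟩
    by_contra h
    exact hk.2 ⟨hk.1, le_of_not_gt h⟩
  choose kf hkf hkf2 using hbad
  have hkfinj : Function.Injective kf := by
    intro j j' h
    by_contra hjj'
    exact hPtdisj j j' hjj' (kf j) (hkf j) (h ▸ hkf j')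
  refine ⟨Set.range kf, ?_, Set.infinite_range_of_injective hkfinj, ?_⟩
  · rintro x ⟨j, rfl⟩; exact hPtD j (hkf j)
  · rintro k ⟨j, rfl⟩
    have hW : Pt j \ {kf j} ⊆ D \ {kf j} :=
      Set.diff_subset_diff_left (hPtD j)
    have hdisj : Disjoint (Pt j \ {kf j}) (Set.range kf \ {kf j}) := by
      rw [Set.disjoint_left]
      rintro x ⟨hx1, hx2⟩ ⟨⟨j', rfl⟩, hx3⟩
      by_cases hjj' : j = j'
      · subst hjj'; exact hx2 rfl
      · exact hPtdisj j' j (fun h => hjj' h.symm) (kf j') (hkf j') hx1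
    have := rowSum_split h0 hs (kf j) hW (by rintro x ⟨j', rfl⟩; exact hPtD j' (hkf j')) hdisj
    have h2 : ε < ∑' n, (Pt j \ {kf j}).indicator (M (kf j)) n := hkf2 j
    linarith

/-- Rosenthal's lemma: for every Rosenthal matrix `M`, every `ε > 0` and every infinite
`B ⊆ ℕ` there is an infinite `A ⊆ B` such that `M` is `ε`-fragmented by `A`. -/
theorem rosenthal_lemma (M : ℕ → ℕ → ℝ) (hM : IsRosenthalMatrix M)
    (ε : ℝ) (hε : 0 < ε) (B : Set ℕ) (hB : B.Infinite) :
    ∃ A ⊆ B, A.Infinite ∧ Fragments M ε A := by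
  obtain ⟨h0, hs, ⟨C, hC⟩⟩ := hM
  by_contra hno
  push_neg at hno
  have hno' : ¬ ∃ A ⊆ B, A.Infinite ∧ Fragments M ε A := by
    rintro ⟨A, h1, h2, h3⟩; exact (hno A h1 h2) h3
  -- iterate the step lemma
  have iter : ∀ t : ℕ, ∃ D ⊆ B, D.Infinite ∧
      ∀ k ∈ D, rowSum M k D + t * ε ≤ rowSum M k B := by
    intro t
    induction t with
    | zero => exact ⟨B, le_refl B, hB, fun k _ => by simp⟩
    | succ t ih =>
      obtain ⟨D, hDB, hDinf, hDle⟩ := ih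
      have hnoD : ¬ ∃ A ⊆ D, A.Infinite ∧ Fragments M ε A := by
        rintro ⟨A, h1, h2, h3⟩
        exact hno' ⟨A, h1.trans hDB, h2, h3⟩
      obtain ⟨D', hD'D, hD'inf, hD'le⟩ := rosenthal_step h0 hs hε hDinf hnoD
      refine ⟨D', hD'D.trans hDB, hD'inf, fun k hk => ?_⟩
      have h1 := hD'le k hk
      have h2 := hDle k (hD'D hk)
      push_cast
      linarith
  obtain ⟨t, ht⟩ := exists_nat_gt (C / ε)
  obtain ⟨D, hDB, hDinf, hDle⟩ := iter t
  obtain ⟨k, hk⟩ := hDinf.nonempty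
  have h1 := hDle k hk
  have h2 : rowSum M k B ≤ C := by
    refine (rowSum_le_tsum h0 hs k B).trans ?_
    exact hC ⟨k, rfl⟩
  have h3 : 0 ≤ rowSum M k D := rowSum_nonneg h0 k D
  have h4 : C < t * ε := (div_lt_iff₀ hε).mp ht
  linarith
end

section
/- Let M = (m_{k,n})_{k,n∈ℕ} be a Rosenthal matrix such that ‖M‖_∞ ≤ 1 and m_{k,n} = 0 whenever n ≥ k. Then for every positive integer l there is a partition {P_1, …, P_l} of ℕ into l pieces such that M is (1/l)-fragmented by P_i for every 1 ≤ i ≤ l. -/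
/-- `‖M‖_∞`, the supremum of the row sums of `M`. -/
noncomputable def rosNorm (M : ℕ → ℕ → ℝ) : ℝ := ⨆ k, ∑' n, M k n

noncomputable def pickColor (l : ℕ) (hl : 0 < l) (S : Fin l → ℝ) : Fin l :=
  if h : ∃ i, S i ≤ 1 / l then h.choose else ⟨0, hl⟩

lemma pickColor_spec (l : ℕ) (hl : 0 < l) (S : Fin l → ℝ) (h : ∃ i, S i ≤ 1 / l) :
    S (pickColor l hl S) ≤ 1 / l := by
  rw [pickColor, dif_pos h]; exact h.choose_spec

noncomputable def color (M : ℕ → ℕ → ℝ) (l : ℕ) (hl : 0 < l) : ℕ → Fin l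
  | k => pickColor l hl fun i =>
      ∑ n ∈ (Finset.range k).attach,
        if color M l hl n.1 = i then M k n.1 else 0
  termination_by k => k
  decreasing_by exact Finset.mem_range.mp n.2

lemma color_eq (M : ℕ → ℕ → ℝ) (l : ℕ) (hl : 0 < l) (k : ℕ) :
    color M l hl k = pickColor l hl fun i =>
      ∑ n ∈ Finset.range k, if color M l hl n = i then M k n else 0 := by
  rw [color]
  congr 1
  funext i
  rw [← Finset.sum_attach (Finset.range k) (fun n => if color M l hl n = i then M k n else 0)]

/-- Lemma: if `M` is a Rosenthal matrix with `‖M‖_∞ ≤ 1` which is lower triangular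
(`m_{k,n} = 0` whenever `n ≥ k`), then for every positive `l` there is a partition of `ℕ`
into `l` pieces each of which `(1/l)`-fragments `M`. -/
theorem triangular_paving_below_diagonal (M : ℕ → ℕ → ℝ) (hM : IsRosenthalMatrix M)
    (hnorm : rosNorm M ≤ 1) (htriang : ∀ k n, k ≤ n → M k n = 0)
    (l : ℕ) (hl : 0 < l) :
    ∃ P : Fin l → Set ℕ, (⋃ i, P i) = Set.univ ∧ Pairwise (Function.onFun Disjoint P) ∧
      ∀ i, Fragments M (1 / l) (P i) := by
  obtain ⟨hpos, hsumm, hbdd⟩ := hM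
  set c := color M l hl with hc
  set S : ℕ → Fin l → ℝ := fun k i => ∑ n ∈ Finset.range k, if c n = i then M k n else 0
    with hS
  -- row sums are bounded by 1
  have hrow : ∀ k, ∑ n ∈ Finset.range k, M k n ≤ 1 := by
    intro k
    have h1 : ∑ n ∈ Finset.range k, M k n ≤ ∑' n, M k n :=
      Summable.sum_le_tsum _ (fun n _ => hpos k n) (hsumm k)
    have h2 : ∑' n, M k n ≤ rosNorm M := le_ciSup hbdd k
    linarith
  -- existence of a good color at each step
  have hex : ∀ k, ∃ i, S k i ≤ 1 / l := by
    intro k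
    by_contra h
    push_neg at h
    have hsum : ∑ i : Fin l, S k i = ∑ n ∈ Finset.range k, M k n := by
      rw [Finset.sum_comm]
      apply Finset.sum_congr rfl
      intro n _
      simp [Finset.sum_ite_eq']
    have h1 : (1 : ℝ) = ∑ _i : Fin l, (1 : ℝ) / l := by
      simp [Finset.card_univ]
      field_simp
    have h2 : ∑ _i : Fin l, (1 : ℝ) / l < ∑ i : Fin l, S k i := by
      apply Finset.sum_lt_sum_of_nonempty
      · exact Finset.univ_nonempty_iff.mpr ⟨⟨0, hl⟩⟩
      · intro i _; exact h i
    have := hrow k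
    rw [hsum] at h2
    linarith
  have hkey : ∀ k, S k (c k) ≤ 1 / l := by
    intro k
    have hck : c k = pickColor l hl (S k) := color_eq M l hl k
    rw [hck]
    exact pickColor_spec l hl (S k) (hex k)
  refine ⟨fun i => {k | c k = i}, ?_, ?_, ?_⟩
  · ext k; simp only [Set.mem_iUnion, Set.mem_univ, iff_true]
    exact ⟨c k, rfl⟩
  · intro i j hij
    simp only [Function.onFun, Set.disjoint_left]
    intro k hk hk'
    exact hij (hk ▸ hk')
  · intro i k hk
    have hkc : c k = i := hk
    have hind : ∑' n : ({k' | c k' = i} \ {k} : Set ℕ), M k ↑n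
        = ∑' n, Set.indicator ({k' | c k' = i} \ {k}) (M k) n := tsum_subtype _ _
    rw [hind, tsum_eq_sum (s := Finset.range k) (by
      intro n hn
      have : k ≤ n := Nat.le_of_not_lt (fun h => hn (Finset.mem_range.mpr h))
      simp [Set.indicator_apply, htriang k n this])]
    calc ∑ n ∈ Finset.range k, Set.indicator ({k' | c k' = i} \ {k}) (M k) n
        ≤ S k i := by
          apply Finset.sum_le_sum
          intro n _
          by_cases hn : n ∈ ({k' | c k' = i} \ {k} : Set ℕ)
          · rw [Set.indicator_of_mem hn]
            have : c n = i := hn.1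
            simp [this]
          · rw [Set.indicator_of_notMem hn]
            split <;> [exact hpos k n; rfl]
      _ ≤ 1 / l := hkc ▸ hkey k
end

section
/- Paving lemma for Rosenthal matrices: For every ε > 0 there is a natural number l(ε) such that for every Rosenthal matrix M there is a partition {P_1, …, P_{l(ε)}} of ℕ into l(ε) pieces such that M is (ε·‖M‖_∞)-fragmented by P_i for every 1 ≤ i ≤ l(ε). -/
open Finset

lemma greedy_lt (L : ℕ) (hL : 0 < L) (M : ℕ → ℕ → ℝ) (B : ℝ)
    (hrow : ∀ k : ℕ, ∀ s : Finset ℕ, ∑ n ∈ s, M k n ≤ B) (F : Finset ℕ) :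
    ∃ c : ℕ → Fin L, ∀ k ∈ F,
      ∑ n ∈ (F.filter (fun n => n < k)).filter (fun n => c n = c k), M k n ≤ B / L := by
  induction F using Finset.strongInduction with
  | _ F ih =>
    rcases F.eq_empty_or_nonempty with rfl | hne
    · exact ⟨fun _ => ⟨0, hL⟩, by simp⟩
    · set a := F.max' hne with ha
      have haF : a ∈ F := F.max'_mem hne
      have hamax : ∀ n ∈ F, n ≤ a := fun n hn => by rw [ha]; exact F.le_max' n hn
      obtain ⟨c', hc'⟩ := ih (F.erase a) (Finset.erase_ssubset haF)
      have hpigeon : ∃ i : Fin L,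
          ∑ n ∈ (F.erase a).filter (fun n => c' n = i), M a n ≤ B / L := by
        by_contra h
        push_neg at h
        have h1 : ∑ i : Fin L, ∑ n ∈ (F.erase a).filter (fun n => c' n = i), M a n
            = ∑ n ∈ F.erase a, M a n := Finset.sum_fiberwise _ _ _
        have hne' : (Finset.univ : Finset (Fin L)).Nonempty :=
          Finset.univ_nonempty_iff.mpr (Fin.pos_iff_nonempty.mp hL)
        have h2 : ∑ _i : Fin L, B / L
            < ∑ i : Fin L, ∑ n ∈ (F.erase a).filter (fun n => c' n = i), M a n :=
          Finset.sum_lt_sum_of_nonempty hne' (fun i _ => h i)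
        have h3 : ∑ _i : Fin L, B / L = B := by
          rw [Finset.sum_const, Finset.card_univ, Fintype.card_fin, nsmul_eq_mul]
          field_simp
        rw [h3, h1] at h2
        exact absurd (hrow a (F.erase a)) (not_le.mpr h2)
      obtain ⟨i₀, hi₀⟩ := hpigeon
      refine ⟨Function.update c' a i₀, ?_⟩
      intro k hk
      by_cases hka : k = a
      · subst hka
        have hfe : F.filter (fun n => n < a) = F.erase a := by
          ext n
          simp only [mem_filter, mem_erase]
          constructor
          · rintro ⟨hn, hlt⟩; exact ⟨ne_of_lt hlt, hn⟩
          · rintro ⟨hne'', hn⟩; exact ⟨hn, lt_of_le_of_ne (hamax n hn) hne''⟩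
        rw [hfe]
        have hset : (F.erase a).filter (fun n => Function.update c' a i₀ n
              = Function.update c' a i₀ a)
            = (F.erase a).filter (fun n => c' n = i₀) := by
          apply Finset.filter_congr
          intro n hn
          rw [Function.update_of_ne (Finset.ne_of_mem_erase hn), Function.update_self]
        rw [hset]
        exact hi₀
      · have hkF' : k ∈ F.erase a := Finset.mem_erase.mpr ⟨hka, hk⟩
        have hfe : F.filter (fun n => n < k) = (F.erase a).filter (fun n => n < k) := by
          ext n
          simp only [mem_filter, mem_erase]
          constructor
          · rintro ⟨hn, hlt⟩
            refine ⟨⟨?_, hn⟩, hlt⟩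
            rintro rfl
            exact absurd hlt (not_lt.mpr (hamax k hk))
          · rintro ⟨⟨_, hn⟩, hlt⟩; exact ⟨hn, hlt⟩
        have hset : ((F.erase a).filter (fun n => n < k)).filter
              (fun n => Function.update c' a i₀ n = Function.update c' a i₀ k)
            = ((F.erase a).filter (fun n => n < k)).filter (fun n => c' n = c' k) := by
          apply Finset.filter_congr
          intro n hn
          have hna : n ≠ a := Finset.ne_of_mem_erase (Finset.mem_filter.mp hn).1
          rw [Function.update_of_ne hna, Function.update_of_ne hka]
        rw [hfe, hset]
        exact hc' k hkF'

lemma greedy_gt (L : ℕ) (hL : 0 < L) (M : ℕ → ℕ → ℝ) (B : ℝ)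
    (hrow : ∀ k : ℕ, ∀ s : Finset ℕ, ∑ n ∈ s, M k n ≤ B) (F : Finset ℕ) :
    ∃ c : ℕ → Fin L, ∀ k ∈ F,
      ∑ n ∈ (F.filter (fun n => k < n)).filter (fun n => c n = c k), M k n ≤ B / L := by
  induction F using Finset.strongInduction with
  | _ F ih =>
    rcases F.eq_empty_or_nonempty with rfl | hne
    · exact ⟨fun _ => ⟨0, hL⟩, by simp⟩
    · set a := F.min' hne with ha
      have haF : a ∈ F := F.min'_mem hne
      have hamin : ∀ n ∈ F, a ≤ n := fun n hn => by rw [ha]; exact F.min'_le n hn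
      obtain ⟨c', hc'⟩ := ih (F.erase a) (Finset.erase_ssubset haF)
      have hpigeon : ∃ i : Fin L,
          ∑ n ∈ (F.erase a).filter (fun n => c' n = i), M a n ≤ B / L := by
        by_contra h
        push_neg at h
        have h1 : ∑ i : Fin L, ∑ n ∈ (F.erase a).filter (fun n => c' n = i), M a n
            = ∑ n ∈ F.erase a, M a n := Finset.sum_fiberwise _ _ _
        have hne' : (Finset.univ : Finset (Fin L)).Nonempty :=
          Finset.univ_nonempty_iff.mpr (Fin.pos_iff_nonempty.mp hL)
        have h2 : ∑ _i : Fin L, B / L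
            < ∑ i : Fin L, ∑ n ∈ (F.erase a).filter (fun n => c' n = i), M a n :=
          Finset.sum_lt_sum_of_nonempty hne' (fun i _ => h i)
        have h3 : ∑ _i : Fin L, B / L = B := by
          rw [Finset.sum_const, Finset.card_univ, Fintype.card_fin, nsmul_eq_mul]
          field_simp
        rw [h3, h1] at h2
        exact absurd (hrow a (F.erase a)) (not_le.mpr h2)
      obtain ⟨i₀, hi₀⟩ := hpigeon
      refine ⟨Function.update c' a i₀, ?_⟩
      intro k hk
      by_cases hka : k = a
      · subst hka
        have hfe : F.filter (fun n => a < n) = F.erase a := by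
          ext n
          simp only [mem_filter, mem_erase]
          constructor
          · rintro ⟨hn, hlt⟩; exact ⟨(ne_of_lt hlt).symm, hn⟩
          · rintro ⟨hne'', hn⟩; exact ⟨hn, lt_of_le_of_ne (hamin n hn) (Ne.symm hne'')⟩
        rw [hfe]
        have hset : (F.erase a).filter (fun n => Function.update c' a i₀ n
              = Function.update c' a i₀ a)
            = (F.erase a).filter (fun n => c' n = i₀) := by
          apply Finset.filter_congr
          intro n hn
          rw [Function.update_of_ne (Finset.ne_of_mem_erase hn), Function.update_self]
        rw [hset]
        exact hi₀
      · have hkF' : k ∈ F.erase a := Finset.mem_erase.mpr ⟨hka, hk⟩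
        have hfe : F.filter (fun n => k < n) = (F.erase a).filter (fun n => k < n) := by
          ext n
          simp only [mem_filter, mem_erase]
          constructor
          · rintro ⟨hn, hlt⟩
            refine ⟨⟨?_, hn⟩, hlt⟩
            rintro rfl
            exact absurd hlt (not_lt.mpr (hamin k hk))
          · rintro ⟨⟨_, hn⟩, hlt⟩; exact ⟨hn, hlt⟩
        have hset : ((F.erase a).filter (fun n => k < n)).filter
              (fun n => Function.update c' a i₀ n = Function.update c' a i₀ k)
            = ((F.erase a).filter (fun n => k < n)).filter (fun n => c' n = c' k) := by
          apply Finset.filter_congr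
          intro n hn
          have hna : n ≠ a := Finset.ne_of_mem_erase (Finset.mem_filter.mp hn).1
          rw [Function.update_of_ne hna, Function.update_of_ne hka]
        rw [hfe, hset]
        exact hc' k hkF'

lemma greedy_pair (L : ℕ) (hL : 0 < L) (M : ℕ → ℕ → ℝ) (B : ℝ)
    (hM0 : ∀ k n, 0 ≤ M k n)
    (hrow : ∀ k : ℕ, ∀ s : Finset ℕ, ∑ n ∈ s, M k n ≤ B) (F : Finset ℕ) :
    ∃ c : ℕ → Fin L × Fin L, ∀ k ∈ F,
      ∑ n ∈ (F.erase k).filter (fun n => c n = c k), M k n ≤ 2 * (B / L) := by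
  obtain ⟨c₁, hc₁⟩ := greedy_lt L hL M B hrow F
  obtain ⟨c₂, hc₂⟩ := greedy_gt L hL M B hrow F
  refine ⟨fun n => (c₁ n, c₂ n), ?_⟩
  intro k hk
  set A := (F.filter (fun n => n < k)).filter (fun n => c₁ n = c₁ k) with hA
  set Bs := (F.filter (fun n => k < n)).filter (fun n => c₂ n = c₂ k) with hBs
  have hdisj : Disjoint A Bs := by
    rw [Finset.disjoint_left]
    intro n hnA hnB
    have h1 : n < k := (Finset.mem_filter.mp (Finset.mem_filter.mp hnA).1).2
    have h2 : k < n := (Finset.mem_filter.mp (Finset.mem_filter.mp hnB).1).2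
    exact absurd (h1.trans h2) (lt_irrefl n)
  have hsub : (F.erase k).filter
      (fun n => (c₁ n, c₂ n) = (c₁ k, c₂ k)) ⊆ A ∪ Bs := by
    intro n hn
    obtain ⟨hne, hnF⟩ := Finset.mem_erase.mp (Finset.mem_filter.mp hn).1
    have hcc : (c₁ n, c₂ n) = (c₁ k, c₂ k) := (Finset.mem_filter.mp hn).2
    have hc1 : c₁ n = c₁ k := congrArg Prod.fst hcc
    have hc2 : c₂ n = c₂ k := congrArg Prod.snd hcc
    rcases lt_or_gt_of_ne hne with hlt | hgt
    · exact Finset.mem_union_left _ (Finset.mem_filter.mpr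
        ⟨Finset.mem_filter.mpr ⟨hnF, hlt⟩, hc1⟩)
    · exact Finset.mem_union_right _ (Finset.mem_filter.mpr
        ⟨Finset.mem_filter.mpr ⟨hnF, hgt⟩, hc2⟩)
  calc ∑ n ∈ (F.erase k).filter (fun n => (c₁ n, c₂ n) = (c₁ k, c₂ k)), M k n
      ≤ ∑ n ∈ A ∪ Bs, M k n :=
        Finset.sum_le_sum_of_subset_of_nonneg hsub (fun n _ _ => hM0 k n)
    _ = ∑ n ∈ A, M k n + ∑ n ∈ Bs, M k n := Finset.sum_union hdisj
    _ ≤ B / L + B / L := add_le_add (hc₁ k hk) (hc₂ k hk)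
    _ = 2 * (B / L) := by ring

lemma exists_global_coloring (L : ℕ) (hL : 0 < L) (M : ℕ → ℕ → ℝ) (B : ℝ)
    (hM0 : ∀ k n, 0 ≤ M k n)
    (hrow : ∀ k : ℕ, ∀ s : Finset ℕ, ∑ n ∈ s, M k n ≤ B) :
    ∃ c : ℕ → Fin L × Fin L, ∀ k : ℕ, ∀ G : Finset ℕ,
      (∀ n ∈ G, c n = c k ∧ n ≠ k) → ∑ n ∈ G, M k n ≤ 2 * (B / L) := by
  choose cF hcF using greedy_pair L hL M B hM0 hrow
  haveI : (Filter.atTop : Filter (Finset ℕ)).NeBot := Filter.atTop_neBot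
  set 𝒰 : Ultrafilter (Finset ℕ) := Ultrafilter.of Filter.atTop with h𝒰
  have hcol : ∀ n : ℕ, ∃ i : Fin L × Fin L, {F : Finset ℕ | cF F n = i} ∈ 𝒰 := by
    intro n
    obtain ⟨i, hi⟩ := (𝒰.map (fun F => cF F n)).eq_pure_of_finite
    refine ⟨i, ?_⟩
    have h1 : ({i} : Set (Fin L × Fin L)) ∈ 𝒰.map (fun F => cF F n) := by
      rw [hi]; exact Set.mem_singleton i ▸ Filter.mem_pure.mpr rfl
    have h2 : (fun F => cF F n) ⁻¹' {i} ∈ 𝒰 := Ultrafilter.mem_map.mp h1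
    have h3 : (fun F => cF F n) ⁻¹' {i} = {F : Finset ℕ | cF F n = i} := by
      ext F; simp
    rwa [h3] at h2
  choose c hc using hcol
  refine ⟨c, ?_⟩
  intro k G hG
  have h1 : {F : Finset ℕ | insert k G ⊆ F} ∈ 𝒰 := by
    have := (Ultrafilter.of_le (Filter.atTop : Filter (Finset ℕ)))
      (Filter.Ici_mem_atTop (insert k G))
    simpa [Set.Ici, Finset.le_iff_subset] using this
  have h2 : {F : Finset ℕ | ∀ x ∈ insert k G, cF F x = c x} ∈ 𝒰 := by
    have heq : {F : Finset ℕ | ∀ x ∈ insert k G, cF F x = c x}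
        = ⋂ x ∈ (insert k G : Finset ℕ), {F : Finset ℕ | cF F x = c x} := by
      ext F; simp
    rw [heq]
    exact (Filter.biInter_finset_mem _).mpr (fun x _ => hc x)
  obtain ⟨F, hF1, hF2⟩ := Filter.nonempty_of_mem (Filter.inter_mem h1 h2)
  have hkF : k ∈ F := hF1 (Finset.mem_insert_self k G)
  have hsub : G ⊆ (F.erase k).filter (fun n => cF F n = cF F k) := by
    intro n hn
    obtain ⟨hcn, hnk⟩ := hG n hn
    refine Finset.mem_filter.mpr ⟨Finset.mem_erase.mpr ⟨hnk, hF1 (Finset.mem_insert_of_mem hn)⟩, ?_⟩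
    rw [hF2 n (Finset.mem_insert_of_mem hn), hcn, ← hF2 k (Finset.mem_insert_self k G)]
  calc ∑ n ∈ G, M k n
      ≤ ∑ n ∈ (F.erase k).filter (fun n => cF F n = cF F k), M k n :=
        Finset.sum_le_sum_of_subset_of_nonneg hsub (fun n _ _ => hM0 k n)
    _ ≤ 2 * (B / L) := hcF F k hkF


/-- Paving lemma for Rosenthal matrices: for every `ε > 0` there is `l(ε) ∈ ℕ` such that
every Rosenthal matrix `M` admits a partition of `ℕ` into `l(ε)` pieces each of which
`(ε·‖M‖_∞)`-fragments `M`. -/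
theorem paving_lemma_rosenthal (ε : ℝ) (hε : 0 < ε) :
    ∃ l : ℕ, 0 < l ∧ ∀ M : ℕ → ℕ → ℝ, IsRosenthalMatrix M →
      ∃ P : Fin l → Set ℕ, (⋃ i, P i) = Set.univ ∧ Pairwise (Function.onFun Disjoint P) ∧
        ∀ i, Fragments M (ε * rosNorm M) (P i) := by
  set L : ℕ := max 1 ⌈2 / ε⌉₊ with hLdef
  have hL : 0 < L := lt_of_lt_of_le one_pos (le_max_left 1 _)
  refine ⟨L * L, Nat.mul_pos hL hL, ?_⟩
  intro M hM
  obtain ⟨hM0, hMsum, hMbdd⟩ := hM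
  set B := rosNorm M with hB
  have hrowt : ∀ k, ∑' n, M k n ≤ B := fun k => le_ciSup hMbdd k
  have hB0 : 0 ≤ B := le_trans (tsum_nonneg (fun n => hM0 0 n)) (hrowt 0)
  have hrow : ∀ k (s : Finset ℕ), ∑ n ∈ s, M k n ≤ B :=
    fun k s => le_trans (Summable.sum_le_tsum s (fun n _ => hM0 k n) (hMsum k)) (hrowt k)
  obtain ⟨c, hc⟩ := exists_global_coloring L hL M B hM0 hrow
  have hLpos : (0 : ℝ) < (L : ℝ) := by exact_mod_cast hL
  have h2L : (2 : ℝ) ≤ ε * L := by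
    have ha : (2 / ε) ≤ (⌈2 / ε⌉₊ : ℝ) := Nat.le_ceil _
    have hb : ((⌈2 / ε⌉₊ : ℕ) : ℝ) ≤ (L : ℝ) := by
      exact_mod_cast Nat.le_max_right 1 ⌈2 / ε⌉₊
    have hc' : 2 / ε ≤ (L : ℝ) := le_trans ha hb
    calc (2 : ℝ) = ε * (2 / ε) := by field_simp
      _ ≤ ε * L := by exact mul_le_mul_of_nonneg_left hc' (le_of_lt hε)
  have hkey : 2 * (B / L) ≤ ε * B := by
    rw [show 2 * (B / L) = 2 * B / L by ring, div_le_iff₀ hLpos]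
    nlinarith [mul_le_mul_of_nonneg_right h2L hB0]
  set e := finProdFinEquiv (m := L) (n := L) with he
  refine ⟨fun i => {n : ℕ | e (c n) = i}, ?_, ?_, ?_⟩
  · ext n
    simp only [Set.mem_iUnion, Set.mem_setOf_eq, Set.mem_univ, iff_true]
    exact ⟨e (c n), rfl⟩
  · intro i j hij
    rw [Function.onFun, Set.disjoint_left]
    intro n hni hnj
    exact hij (hni.symm.trans hnj)
  · intro i k hk
    have hck : e (c k) = i := hk
    apply Summable.tsum_le_of_sum_le ((hMsum k).subtype _)
    intro s
    refine le_trans (le_of_eq ?_) (le_trans (hc k (s.image Subtype.val) ?_) hkey)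
    · exact (Finset.sum_image (fun x _ y _ h => Subtype.ext h)).symm
    · intro n hn
      obtain ⟨x, _, rfl⟩ := Finset.mem_image.mp hn
      have hxP : e (c ↑x) = i := x.2.1
      have hxk : (↑x : ℕ) ≠ k := fun h => x.2.2 (by simp [h])
      exact ⟨e.injective (hxP.trans hck.symm), hxk⟩
end

section
/- Every π-base of a nonprincipal ultrafilter on ℕ is a Rosenthal family: if u is a nonprincipal ultrafilter on ℕ and B is a π-base of u, then for every Rosenthal matrix M and every ε > 0 there is A ∈ B such that M is ε-fragmented by A. -/
namespace PiBaseRosenthal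

open Finset

/-! ### A generic greedy colouring

Given a matrix `w`, we colour the naturals one by one; the colour of `v` is chosen to
minimise the `w v`-mass of earlier points of the same colour.  Thus for each `v` the
`w v`-mass of `{n < v : same colour as v}` is at most `1/m` of the full mass of row `v`
on `[0, v)`. -/

section Greedy

variable (w : ℕ → ℕ → ℝ) (m : ℕ) (hm : 0 < m)

noncomputable def pickFn (v : ℕ) (prev : ℕ → Fin m) : Fin m :=
  (Finset.exists_min_image (Finset.univ : Finset (Fin m))
    (fun i => ∑ n ∈ (Finset.range v).filter (fun n => prev n = i), w v n)
    ⟨⟨0, hm⟩, Finset.mem_univ _⟩).choose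

lemma pickFn_spec (v : ℕ) (prev : ℕ → Fin m) (i : Fin m) :
    ∑ n ∈ (Finset.range v).filter (fun n => prev n = pickFn w m hm v prev), w v n ≤
      ∑ n ∈ (Finset.range v).filter (fun n => prev n = i), w v n := by
  have h := (Finset.exists_min_image (Finset.univ : Finset (Fin m))
    (fun i => ∑ n ∈ (Finset.range v).filter (fun n => prev n = i), w v n)
    ⟨⟨0, hm⟩, Finset.mem_univ _⟩).choose_spec
  exact h.2 i (Finset.mem_univ i)

noncomputable def greedyAux : ℕ → ℕ → Fin m
  | 0, _ => ⟨0, hm⟩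
  | (t+1), n => if n = t then pickFn w m hm t (greedyAux t) else greedyAux t n

noncomputable def greedyC (v : ℕ) : Fin m := greedyAux w m hm (v+1) v

lemma greedyAux_eq : ∀ t n, n < t → greedyAux w m hm t n = greedyC w m hm n := by
  intro t
  induction t with
  | zero => intro n h; omega
  | succ t ih =>
    intro n h
    by_cases hn : n = t
    · subst hn; simp [greedyC, greedyAux]
    · have hlt : n < t := by omega
      simp only [greedyAux, if_neg hn]
      exact ih n hlt

lemma greedyC_eq (v : ℕ) :
    greedyC w m hm v = pickFn w m hm v (greedyAux w m hm v) := by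
  simp [greedyC, greedyAux]

lemma greedy_min (v : ℕ) (i : Fin m) :
    ∑ n ∈ (Finset.range v).filter (fun n => greedyC w m hm n = greedyC w m hm v), w v n ≤
      ∑ n ∈ (Finset.range v).filter (fun n => greedyC w m hm n = i), w v n := by
  have hfilter : ∀ j : Fin m,
      (Finset.range v).filter (fun n => greedyC w m hm n = j) =
        (Finset.range v).filter (fun n => greedyAux w m hm v n = j) := by
    intro j
    apply Finset.filter_congr
    intro n hn
    rw [greedyAux_eq w m hm v n (Finset.mem_range.mp hn)]
  rw [hfilter, hfilter, greedyC_eq]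
  exact pickFn_spec w m hm v _ i

lemma greedy_bound (C δ : ℝ) (hδ : 0 ≤ δ)
    (hC : ∀ v, ∑ n ∈ Finset.range v, w v n ≤ C) (hmC : C ≤ (m : ℝ) * δ) (v : ℕ) :
    ∑ n ∈ (Finset.range v).filter (fun n => greedyC w m hm n = greedyC w m hm v), w v n
      ≤ δ := by
  set S : Fin m → ℝ :=
    fun i => ∑ n ∈ (Finset.range v).filter (fun n => greedyC w m hm n = i), w v n with hS
  have h1 : (m : ℝ) * S (greedyC w m hm v) ≤ ∑ i : Fin m, S i := by
    have h2 : ∑ _i : Fin m, S (greedyC w m hm v) ≤ ∑ i : Fin m, S i :=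
      Finset.sum_le_sum (fun i _ => greedy_min w m hm v i)
    simpa [Finset.sum_const, Finset.card_univ, nsmul_eq_mul] using h2
  have h2 : ∑ i : Fin m, S i = ∑ n ∈ Finset.range v, w v n := by
    rw [hS]
    exact Finset.sum_fiberwise_of_maps_to (fun n _ => Finset.mem_univ _) _
  have h3 : (m : ℝ) * S (greedyC w m hm v) ≤ (m : ℝ) * δ := by
    calc (m : ℝ) * S (greedyC w m hm v) ≤ ∑ i : Fin m, S i := h1
    _ = ∑ n ∈ Finset.range v, w v n := h2
    _ ≤ C := hC v
    _ ≤ (m : ℝ) * δ := hmC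
  have hmpos : (0 : ℝ) < m := by exact_mod_cast hm
  exact (mul_le_mul_iff_right₀ hmpos).mp h3

end Greedy

/-! ### Intervals -/

section Intervals

variable (M : ℕ → ℕ → ℝ) (hsum : ∀ k, Summable (M k)) (δ : ℝ) (hδ : 0 < δ)

include hsum hδ in
lemma tail_exists (k : ℕ) :
    ∃ N : ℕ, (∑' n, M k n) - ∑ n ∈ Finset.range N, M k n ≤ δ := by
  have h := (hsum k).hasSum.tendsto_sum_nat
  have h2 : ∀ᶠ N in Filter.atTop,
      (∑' n, M k n) - δ < ∑ n ∈ Finset.range N, M k n :=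
    h.eventually (eventually_gt_nhds (by linarith))
  obtain ⟨N, hN⟩ := h2.exists
  exact ⟨N, by linarith⟩

noncomputable def tailN (k : ℕ) : ℕ := (tail_exists M hsum δ hδ k).choose

omit hsum hδ in
lemma partial_mono (hpos : ∀ k n, 0 ≤ M k n) (k : ℕ) {a b : ℕ} (h : a ≤ b) :
    ∑ n ∈ Finset.range a, M k n ≤ ∑ n ∈ Finset.range b, M k n :=
  Finset.sum_le_sum_of_subset_of_nonneg
    (Finset.range_subset_range.mpr h) (fun n _ _ => hpos k n)

lemma tailN_spec (hpos : ∀ k n, 0 ≤ M k n) (k N : ℕ) (h : tailN M hsum δ hδ k ≤ N) :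
    (∑' n, M k n) - ∑ n ∈ Finset.range N, M k n ≤ δ := by
  have h1 := (tail_exists M hsum δ hδ k).choose_spec
  have h2 := partial_mono M hpos k h
  dsimp [tailN] at h2 ⊢
  linarith

noncomputable def stepF (t : ℕ) : ℕ :=
  t + 1 + (Finset.range t).sup (tailN M hsum δ hδ)

lemma lt_stepF (t : ℕ) : t < stepF M hsum δ hδ t := by
  dsimp [stepF]; omega

lemma tail_stepF (hpos : ∀ k n, 0 ≤ M k n) (k t : ℕ) (hk : k < t) :
    (∑' n, M k n) - ∑ n ∈ Finset.range (stepF M hsum δ hδ t), M k n ≤ δ := by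
  apply tailN_spec M hsum δ hδ hpos
  calc tailN M hsum δ hδ k ≤ (Finset.range t).sup (tailN M hsum δ hδ) :=
        Finset.le_sup (Finset.mem_range.mpr hk)
  _ ≤ stepF M hsum δ hδ t := by dsimp [stepF]; omega

noncomputable def bdF : ℕ → ℕ
  | 0 => 0
  | (j+1) => stepF M hsum δ hδ (bdF j)

lemma bdF_strictMono : StrictMono (bdF M hsum δ hδ) :=
  strictMono_nat_of_lt_succ (fun j => lt_stepF M hsum δ hδ (bdF M hsum δ hδ j))

lemma le_bdF (j : ℕ) : j ≤ bdF M hsum δ hδ j := by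
  induction j with
  | zero => simp
  | succ j ih =>
    have := lt_stepF M hsum δ hδ (bdF M hsum δ hδ j)
    have h2 : bdF M hsum δ hδ (j+1) = stepF M hsum δ hδ (bdF M hsum δ hδ j) := rfl
    omega

noncomputable def idxF (v : ℕ) : ℕ :=
  Nat.findGreatest (fun j => bdF M hsum δ hδ j ≤ v) (v+1)

lemma bdF_idxF_le (v : ℕ) : bdF M hsum δ hδ (idxF M hsum δ hδ v) ≤ v :=
  Nat.findGreatest_spec (P := fun j => bdF M hsum δ hδ j ≤ v) (Nat.zero_le _)
    (by simp [bdF])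

lemma lt_bdF_idxF_succ (v : ℕ) : v < bdF M hsum δ hδ (idxF M hsum δ hδ v + 1) := by
  by_contra hcon
  push_neg at hcon
  have h1 : idxF M hsum δ hδ v + 1 ≤ v + 1 := by
    have := le_bdF M hsum δ hδ (idxF M hsum δ hδ v + 1)
    omega
  have h2 : idxF M hsum δ hδ v + 1 ≤ idxF M hsum δ hδ v :=
    Nat.le_findGreatest (P := fun j => bdF M hsum δ hδ j ≤ v) h1 hcon
  omega

lemma idxF_unique {v j : ℕ} (h1 : bdF M hsum δ hδ j ≤ v) (h2 : v < bdF M hsum δ hδ (j+1)) :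
    idxF M hsum δ hδ v = j := by
  rcases lt_trichotomy (idxF M hsum δ hδ v) j with h | h | h
  · exfalso
    have h3 : idxF M hsum δ hδ v + 1 ≤ j := h
    have h4 := (bdF_strictMono M hsum δ hδ).monotone h3
    have h5 := lt_bdF_idxF_succ M hsum δ hδ v
    omega
  · exact h
  · exfalso
    have h3 : j + 1 ≤ idxF M hsum δ hδ v := h
    have h4 := (bdF_strictMono M hsum δ hδ).monotone h3
    have h5 := bdF_idxF_le M hsum δ hδ v
    omega

lemma idxF_ge {v j : ℕ} (h : bdF M hsum δ hδ j ≤ v) : j ≤ idxF M hsum δ hδ v := by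
  have hj : j ≤ v + 1 := by
    have := le_bdF M hsum δ hδ j
    omega
  exact Nat.le_findGreatest (P := fun j => bdF M hsum δ hδ j ≤ v) hj h

/-- Reflection of `v` inside its interval `[bdF j, bdF (j+1))`. -/
noncomputable def reflF (v : ℕ) : ℕ :=
  bdF M hsum δ hδ (idxF M hsum δ hδ v) +
    (bdF M hsum δ hδ (idxF M hsum δ hδ v + 1) - 1 - v)

lemma reflF_bounds (v : ℕ) :
    bdF M hsum δ hδ (idxF M hsum δ hδ v) ≤ reflF M hsum δ hδ v ∧
      reflF M hsum δ hδ v < bdF M hsum δ hδ (idxF M hsum δ hδ v + 1) := by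
  have h1 := bdF_idxF_le M hsum δ hδ v
  have h2 := lt_bdF_idxF_succ M hsum δ hδ v
  dsimp [reflF]
  omega

lemma idxF_reflF (v : ℕ) : idxF M hsum δ hδ (reflF M hsum δ hδ v) = idxF M hsum δ hδ v :=
  idxF_unique M hsum δ hδ (reflF_bounds M hsum δ hδ v).1 (reflF_bounds M hsum δ hδ v).2

lemma reflF_reflF (v : ℕ) : reflF M hsum δ hδ (reflF M hsum δ hδ v) = v := by
  have h1 := bdF_idxF_le M hsum δ hδ v
  have h2 := lt_bdF_idxF_succ M hsum δ hδ v
  have h3 := idxF_reflF M hsum δ hδ v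
  dsimp [reflF] at *
  rw [h3]
  omega

lemma reflF_inj : Function.Injective (reflF M hsum δ hδ) :=
  Function.Involutive.injective (reflF_reflF M hsum δ hδ)

lemma reflF_lt {k n : ℕ} (hidx : idxF M hsum δ hδ n = idxF M hsum δ hδ k) (h : k < n) :
    reflF M hsum δ hδ n < reflF M hsum δ hδ k := by
  have h2 := lt_bdF_idxF_succ M hsum δ hδ n
  dsimp [reflF]
  rw [hidx] at h2 ⊢
  omega

end Intervals

end PiBaseRosenthal

open PiBaseRosenthal Finset in
/-- Every `π`-base of a nonprincipal ultrafilter on `ℕ` is a Rosenthal family. -/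
theorem pi_base_is_rosenthal_family (u : Ultrafilter ℕ)
    (hu : (u : Filter ℕ) ≤ Filter.cofinite)
    (B : Set (Set ℕ)) (hBinf : ∀ b ∈ B, b.Infinite)
    (hbase : ∀ A ∈ u, ∃ b ∈ B, b ⊆ A)
    (M : ℕ → ℕ → ℝ) (hM : IsRosenthalMatrix M) (ε : ℝ) (hε : 0 < ε) :
    ∃ A ∈ B, Fragments M ε A := by
  classical
  obtain ⟨h0, hsum, hbdd⟩ := hM
  obtain ⟨C, hCub⟩ := hbdd
  have hC : ∀ k, (∑' n, M k n) ≤ C := fun k => hCub (Set.mem_range_self k)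
  set δ : ℝ := ε / 4 with hδdef
  have hδ : 0 < δ := by positivity
  -- choose number of colours
  obtain ⟨m₁, hm₁⟩ := exists_nat_ge (C / δ)
  set m : ℕ := m₁ + 1 with hmdef
  have hm : 0 < m := Nat.succ_pos _
  have hmC : C ≤ (m : ℝ) * δ := by
    rw [div_le_iff₀ hδ] at hm₁
    have hcast : ((m₁ : ℝ)) ≤ (m : ℝ) := by exact_mod_cast Nat.le_succ m₁
    nlinarith [hδ.le]
  -- abbreviations
  set r : ℕ → ℕ := reflF M hsum δ hδ with hrdef
  set Mr : ℕ → ℕ → ℝ := fun v n => M (r v) (r n) with hMrdef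
  have hrr : ∀ v, r (r v) = v := fun v => reflF_reflF M hsum δ hδ v
  -- row bounds for the two matrices
  have hCL : ∀ v, ∑ n ∈ Finset.range v, M v n ≤ C := by
    intro v
    calc ∑ n ∈ Finset.range v, M v n ≤ ∑' n, M v n :=
          Summable.sum_le_tsum _ (fun n _ => h0 v n) (hsum v)
    _ ≤ C := hC v
  have hCU : ∀ v, ∑ n ∈ Finset.range v, Mr v n ≤ C := by
    intro v
    have himg : ∑ n ∈ Finset.range v, Mr v n
        = ∑ x ∈ (Finset.range v).image r, M (r v) x := by
      rw [Finset.sum_image (fun x _ y _ h => reflF_inj M hsum δ hδ h)]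
    rw [himg]
    calc ∑ x ∈ (Finset.range v).image r, M (r v) x ≤ ∑' n, M (r v) n :=
          Summable.sum_le_tsum _ (fun n _ => h0 (r v) n) (hsum (r v))
    _ ≤ C := hC (r v)
  -- the finite colouring
  set κ : ℕ → Fin 2 × Fin m × Fin m := fun v =>
    (⟨idxF M hsum δ hδ v % 2, Nat.mod_lt _ (by norm_num)⟩,
      greedyC M m hm v, greedyC Mr m hm (r v)) with hκdef
  -- the ultrafilter picks a colour class
  have hexists : ∃ σ : Fin 2 × Fin m × Fin m, {v | κ v = σ} ∈ u := by
    by_contra hcon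
    push_neg at hcon
    have hcompl : ∀ σ : Fin 2 × Fin m × Fin m, {v | κ v = σ}ᶜ ∈ u :=
      fun σ => (Ultrafilter.compl_mem_iff_notMem).mpr (hcon σ)
    have hint : (⋂ σ : Fin 2 × Fin m × Fin m, {v | κ v = σ}ᶜ) ∈ u :=
      (Filter.iInter_mem).mpr hcompl
    have hempty : (⋂ σ : Fin 2 × Fin m × Fin m, {v | κ v = σ}ᶜ) = (∅ : Set ℕ) := by
      ext v
      simp only [Set.mem_iInter, Set.mem_compl_iff, Set.mem_setOf_eq, Set.mem_empty_iff_false,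
        iff_false, not_forall, not_not]
      exact ⟨κ v, rfl⟩
    rw [hempty] at hint
    exact Filter.empty_notMem (u : Filter ℕ) hint
  obtain ⟨σ, hX⟩ := hexists
  obtain ⟨A, hAB, hAX⟩ := hbase _ hX
  refine ⟨A, hAB, ?_⟩
  intro k hkA
  have hκk : κ k = σ := hAX hkA
  set j : ℕ := idxF M hsum δ hδ k with hjdef
  have hbk0 : bdF M hsum δ hδ j ≤ k := bdF_idxF_le M hsum δ hδ k
  have hbk1 : k < bdF M hsum δ hδ (j + 1) := lt_bdF_idxF_succ M hsum δ hδ k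
  -- reduce the tsum to finite sums
  have hsubSummable : Summable (fun n : (A \ {k} : Set ℕ) => M k (n : ℕ)) :=
    (hsum k).subtype _
  refine Summable.tsum_le_of_sum_le hsubSummable ?_
  intro s
  have hsum_eq : ∑ n ∈ s.image Subtype.val, M k n = ∑ i ∈ s, M k (i : ℕ) := by
    rw [Finset.sum_image]
    intro x _ y _ h
    exact Subtype.val_injective h
  rw [← hsum_eq]
  set F : Finset ℕ := s.image Subtype.val with hFdef
  have hFmem : ∀ n ∈ F, n ∈ A ∧ n ≠ k := by
    intro n hn
    obtain ⟨i, _, rfl⟩ := Finset.mem_image.mp hn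
    have h2 := i.2
    simp only [Set.mem_diff, Set.mem_singleton_iff] at h2
    exact ⟨h2.1, h2.2⟩
  have hκF : ∀ n ∈ F, κ n = κ k := by
    intro n hn
    rw [hκk]
    exact hAX (hFmem n hn).1
  -- split the sum in three pieces
  rw [← Finset.sum_filter_add_sum_filter_not F (fun n => n < k) (M k),
    ← Finset.sum_filter_add_sum_filter_not (F.filter (fun n => ¬ n < k))
      (fun n => n < bdF M hsum δ hδ (j + 1)) (M k)]
  -- Bound 1 : the part strictly before `k`, same greedy-L colour
  have hB1 : ∑ n ∈ F.filter (fun n => n < k), M k n ≤ δ := by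
    have hsub : F.filter (fun n => n < k) ⊆
        (Finset.range k).filter (fun n => greedyC M m hm n = greedyC M m hm k) := by
      intro n hn
      rw [Finset.mem_filter] at hn ⊢
      refine ⟨Finset.mem_range.mpr hn.2, ?_⟩
      have := hκF n hn.1
      have h2 := congrArg (fun p : Fin 2 × Fin m × Fin m => p.2.1) this
      simpa [hκdef] using h2
    calc ∑ n ∈ F.filter (fun n => n < k), M k n
        ≤ ∑ n ∈ (Finset.range k).filter
            (fun n => greedyC M m hm n = greedyC M m hm k), M k n :=
          Finset.sum_le_sum_of_subset_of_nonneg hsub (fun n _ _ => h0 k n)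
    _ ≤ δ := greedy_bound M m hm C δ hδ.le hCL hmC k
  -- Bound 2 : the part in the same interval after `k`, same greedy-U colour
  have hB2 : ∑ n ∈ (F.filter (fun n => ¬ n < k)).filter
      (fun n => n < bdF M hsum δ hδ (j + 1)), M k n ≤ δ := by
    set F2 := (F.filter (fun n => ¬ n < k)).filter
      (fun n => n < bdF M hsum δ hδ (j + 1)) with hF2def
    have hmemF2 : ∀ n ∈ F2, k < n ∧ idxF M hsum δ hδ n = j := by
      intro n hn
      rw [hF2def, Finset.mem_filter, Finset.mem_filter] at hn
      have hne : n ≠ k := (hFmem n hn.1.1).2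
      have hkn : k < n := lt_of_le_of_ne (not_lt.mp hn.1.2) (Ne.symm hne)
      refine ⟨hkn, idxF_unique M hsum δ hδ ?_ hn.2⟩
      exact le_trans hbk0 hkn.le
    have hptw : ∀ n ∈ F2, M k n = Mr (r k) (r n) := by
      intro n _
      simp only [hMrdef]
      rw [hrr, hrr]
    have himg : ∑ n ∈ F2, M k n = ∑ x ∈ F2.image r, Mr (r k) x := by
      rw [Finset.sum_image (fun x _ y _ h => reflF_inj M hsum δ hδ h)]
      exact Finset.sum_congr rfl hptw
    have hsub : F2.image r ⊆ (Finset.range (r k)).filter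
        (fun x => greedyC Mr m hm x = greedyC Mr m hm (r k)) := by
      intro x hx
      obtain ⟨n, hn, rfl⟩ := Finset.mem_image.mp hx
      obtain ⟨hkn, hidx⟩ := hmemF2 n hn
      rw [Finset.mem_filter]
      constructor
      · apply Finset.mem_range.mpr
        exact reflF_lt M hsum δ hδ (by rw [hidx, hjdef]) hkn
      · have hF : n ∈ F := by
          rw [hF2def, Finset.mem_filter, Finset.mem_filter] at hn
          exact hn.1.1
        have := hκF n hF
        have h2 := congrArg (fun p : Fin 2 × Fin m × Fin m => p.2.2) this
        simpa [hκdef] using h2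
    rw [himg]
    calc ∑ x ∈ F2.image r, Mr (r k) x
        ≤ ∑ x ∈ (Finset.range (r k)).filter
            (fun x => greedyC Mr m hm x = greedyC Mr m hm (r k)), Mr (r k) x :=
          Finset.sum_le_sum_of_subset_of_nonneg hsub
            (fun x _ _ => h0 (r (r k)) (r x))
    _ ≤ δ := greedy_bound Mr m hm C δ hδ.le hCU hmC (r k)
  -- Bound 3 : the far part, beyond the next interval
  have hB3 : ∑ n ∈ (F.filter (fun n => ¬ n < k)).filter
      (fun n => ¬ n < bdF M hsum δ hδ (j + 1)), M k n ≤ δ := by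
    set F3 := (F.filter (fun n => ¬ n < k)).filter
      (fun n => ¬ n < bdF M hsum δ hδ (j + 1)) with hF3def
    have hmemF3 : ∀ n ∈ F3, bdF M hsum δ hδ (j + 2) ≤ n := by
      intro n hn
      rw [hF3def, Finset.mem_filter, Finset.mem_filter] at hn
      have hFn : n ∈ F := hn.1.1
      have hge : bdF M hsum δ hδ (j + 1) ≤ n := not_lt.mp hn.2
      have hidxge : j + 1 ≤ idxF M hsum δ hδ n := idxF_ge M hsum δ hδ hge
      have hpar : idxF M hsum δ hδ n % 2 = j % 2 := by
        have := hκF n hFn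
        have h2 := congrArg (fun p : Fin 2 × Fin m × Fin m => (p.1 : ℕ)) this
        simpa [hκdef, hjdef] using h2
      have hne : idxF M hsum δ hδ n ≠ j + 1 := by
        intro hcontra
        rw [hcontra] at hpar
        omega
      have h2 : j + 2 ≤ idxF M hsum δ hδ n := by omega
      calc bdF M hsum δ hδ (j + 2) ≤ bdF M hsum δ hδ (idxF M hsum δ hδ n) :=
            (bdF_strictMono M hsum δ hδ).monotone h2
      _ ≤ n := bdF_idxF_le M hsum δ hδ n
    have hdisj : Disjoint F3 (Finset.range (bdF M hsum δ hδ (j + 2))) := by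
      rw [Finset.disjoint_left]
      intro n hn hrange
      have := hmemF3 n hn
      rw [Finset.mem_range] at hrange
      omega
    have hle : ∑ n ∈ F3, M k n + ∑ n ∈ Finset.range (bdF M hsum δ hδ (j + 2)), M k n
        ≤ ∑' n, M k n := by
      rw [← Finset.sum_union hdisj]
      exact Summable.sum_le_tsum _ (fun n _ => h0 k n) (hsum k)
    have htail : (∑' n, M k n) - ∑ n ∈ Finset.range (bdF M hsum δ hδ (j + 2)), M k n
        ≤ δ := by
      have hstep : bdF M hsum δ hδ (j + 2) =
          stepF M hsum δ hδ (bdF M hsum δ hδ (j + 1)) := rfl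
      rw [hstep]
      exact tail_stepF M hsum δ hδ h0 k _ hbk1
    linarith
  have h3δ : 3 * δ ≤ ε := by rw [hδdef]; linarith
  linarith
end

section
/- Suppose (C_ξ)_{ξ<ω₁} is an almost disjoint family of infinite subsets of ℕ, A is a Boolean algebra, (μ_k)_{k∈ℕ} are finitely additive positive measures on A with μ_k(1_A) ≤ ρ for all k and some ρ ∈ ℝ, and (A_n)_{n∈ℕ} are pairwise disjoint elements of A. Then for all but countably many ξ < ω₁ the following holds: for every k ∈ ℕ and every B ⊆ C_ξ such that the supremum ⋁_{n∈B} A_n exists in A, one has μ_k(⋁_{n∈B} A_n) = Σ_{n∈B} μ_k(A_n). -/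
section Aux

variable {α : Type*} [BooleanAlgebra α]

lemma mu_bot (μ : α → ℝ)
    (hadd : ∀ a b, a ⊓ b = ⊥ → μ (a ⊔ b) = μ a + μ b) : μ ⊥ = 0 := by
  have := hadd ⊥ ⊥ (by simp)
  simp at this; linarith

lemma mu_mono (μ : α → ℝ) (hpos : ∀ a, 0 ≤ μ a)
    (hadd : ∀ a b, a ⊓ b = ⊥ → μ (a ⊔ b) = μ a + μ b) :
    ∀ a b : α, a ≤ b → μ a ≤ μ b := by
  intro a b hab
  have h1 : a ⊔ b \ a = b := sup_sdiff_cancel' le_rfl hab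
  have h2 : a ⊓ (b \ a) = ⊥ := by simp
  have := hadd a (b \ a) h2
  rw [h1] at this
  have := hpos (b \ a)
  linarith

lemma mu_finset_sup (μ : α → ℝ)
    (hadd : ∀ a b, a ⊓ b = ⊥ → μ (a ⊔ b) = μ a + μ b)
    {ι : Type*} (g : ι → α) (F : Finset ι)
    (hdisj : ∀ i ∈ F, ∀ j ∈ F, i ≠ j → g i ⊓ g j = ⊥) :
    μ (F.sup g) = ∑ i ∈ F, μ (g i) := by
  classical
  induction F using Finset.cons_induction with
  | empty => simpa using mu_bot μ hadd
  | cons a F ha ih =>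
    have hb : g a ⊓ F.sup g = ⊥ := by
      have hle : F.sup g ≤ (g a)ᶜ := by
        apply Finset.sup_le
        intro j hj
        have := hdisj a (Finset.mem_cons_self a F) j (Finset.mem_cons_of_mem hj)
          (by rintro rfl; exact ha hj)
        rw [← disjoint_iff] at this
        exact le_compl_iff_disjoint_left.mpr this
      have : g a ⊓ F.sup g ≤ g a ⊓ (g a)ᶜ := inf_le_inf_left _ hle
      simpa using le_bot_iff.mp (by simpa using this)
    rw [Finset.sup_cons, hadd _ _ hb, Finset.sum_cons,
      ih (fun i hi j hj hij => hdisj i (Finset.mem_cons_of_mem hi) j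
        (Finset.mem_cons_of_mem hj) hij)]

lemma lub_inf_bot (A : ℕ → α) (B : Set ℕ) (s x : α)
    (h : IsLUB (A '' B) s) (hx : ∀ n ∈ B, x ⊓ A n = ⊥) : x ⊓ s = ⊥ := by
  have hs : s ≤ xᶜ := by
    apply h.2
    rintro _ ⟨n, hn, rfl⟩
    have := hx n hn
    rw [← disjoint_iff] at this
    exact le_compl_iff_disjoint_left.mpr this
  have : x ⊓ s ≤ x ⊓ xᶜ := inf_le_inf_left _ hs
  simpa using le_bot_iff.mp (by simpa using this)

end Aux

/-- For an `ω₁`-indexed almost disjoint family `(C ξ)_{ξ<ω₁}` of infinite subsets of `ℕ`,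
a uniformly bounded sequence `(μ k)_{k∈ℕ}` of finitely additive positive measures on a
Boolean algebra `α` and a sequence `(A n)_{n∈ℕ}` of pairwise disjoint elements of `α`:
for all but countably many `ξ < ω₁`, for every `k ∈ ℕ` and every `B ⊆ C ξ` such that
`⋁_{n ∈ B} A n` exists in `α`, we have `μ k (⋁_{n ∈ B} A n) = Σ_{n ∈ B} μ k (A n)`. -/
theorem avoiding_boundary {α : Type*} [BooleanAlgebra α]
    (C : {ξ : Ordinal // ξ < (Cardinal.aleph 1).ord} → Set ℕ)
    (hCinf : ∀ ξ, (C ξ).Infinite)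
    (hCad : ∀ ξ η, ξ ≠ η → (C ξ ∩ C η).Finite)
    (μ : ℕ → α → ℝ)
    (hμpos : ∀ k a, 0 ≤ μ k a)
    (hμadd : ∀ k a b, a ⊓ b = ⊥ → μ k (a ⊔ b) = μ k a + μ k b)
    (ρ : ℝ) (hμbdd : ∀ k, μ k ⊤ ≤ ρ)
    (A : ℕ → α) (hAdisj : ∀ m n, m ≠ n → A m ⊓ A n = ⊥) :
    {ξ | ¬ ∀ k : ℕ, ∀ B ⊆ C ξ, ∀ s : α, IsLUB (A '' B) s →
        HasSum (fun n : B => μ k (A n)) (μ k s)}.Countable := by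
  classical
  -- General facts about sums over subsets B with a LUB.
  -- For B ⊆ ℕ with IsLUB (A '' B) s, partial sums over finsets are ≤ μ k s.
  have partial_bound : ∀ (k : ℕ) (B : Set ℕ) (s : α), IsLUB (A '' B) s →
      ∀ G : Finset ℕ, ↑G ⊆ B → ∑ n ∈ G, μ k (A n) ≤ μ k s := by
    intro k B s hlub G hG
    rw [← mu_finset_sup (μ k) (hμadd k) A G
      (fun i _ j _ hij => hAdisj i j hij)]
    apply mu_mono (μ k) (hμpos k) (hμadd k)
    apply Finset.sup_le
    intro n hn
    exact hlub.1 ⟨n, hG hn, rfl⟩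
  have summable_fact : ∀ (k : ℕ) (B : Set ℕ) (s : α), IsLUB (A '' B) s →
      Summable (fun n : B => μ k (A n)) ∧ (∑' n : B, μ k (A n)) ≤ μ k s := by
    intro k B s hlub
    have hb : ∀ u : Finset B, ∑ n ∈ u, μ k (A n) ≤ μ k s := by
      intro u
      have heq : ∑ n ∈ u.image Subtype.val, μ k (A n) = ∑ n ∈ u, μ k (A ↑n) :=
        Finset.sum_image (fun x _ y _ h => Subtype.val_injective h)
      rw [← heq]
      exact partial_bound k B s hlub _ (by
        intro n hn
        simp only [Finset.coe_image] at hn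
        obtain ⟨m, _, rfl⟩ := hn
        exact m.2)
    have hs : Summable (fun n : B => μ k (A n)) :=
      summable_of_sum_le (fun n => hμpos k _) hb
    exact ⟨hs, Summable.tsum_le_of_sum_le hs hb⟩
  -- The bad set decomposes according to (k, q).
  set P : ℕ → ℕ → {ξ : Ordinal // ξ < (Cardinal.aleph 1).ord} → Prop := fun k q ξ =>
    ∃ B : Set ℕ, ∃ s : α, B ⊆ C ξ ∧ IsLUB (A '' B) s ∧
      (∑' n : B, μ k (A n)) + 1 / (q + 1) ≤ μ k s with hP
  have hsubset : {ξ : {ξ : Ordinal // ξ < (Cardinal.aleph 1).ord} | ¬ ∀ k : ℕ, ∀ B ⊆ C ξ, ∀ s : α, IsLUB (A '' B) s →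
        HasSum (fun n : B => μ k (A n)) (μ k s)} ⊆ ⋃ k : ℕ, ⋃ q : ℕ, {ξ | P k q ξ} := by
    intro ξ hξ
    simp only [Set.mem_setOf_eq] at hξ
    push_neg at hξ
    obtain ⟨k, B, hB, s, hlub, hns⟩ := hξ
    obtain ⟨hsumm, hle⟩ := summable_fact k B s hlub
    have hne : (∑' n : B, μ k (A n)) ≠ μ k s := fun h => hns (h ▸ hsumm.hasSum)
    have hlt : (∑' n : B, μ k (A n)) < μ k s := lt_of_le_of_ne hle hne
    obtain ⟨q, hq⟩ := exists_nat_one_div_lt (sub_pos.mpr hlt)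
    refine Set.mem_iUnion.mpr ⟨k, Set.mem_iUnion.mpr ⟨q, ?_⟩⟩
    refine ⟨B, s, hB, hlub, ?_⟩
    have : (1 : ℝ) / (q + 1) < μ k s - ∑' n : B, μ k (A n) := by exact_mod_cast hq
    linarith
  refine Set.Countable.mono hsubset ?_
  refine Set.countable_iUnion fun k => Set.countable_iUnion fun q => ?_
  -- Each P k q has only finitely many solutions.
  refine Set.Finite.countable ?_
  by_contra hinf
  have hinf : {ξ : {ξ : Ordinal // ξ < (Cardinal.aleph 1).ord} | P k q ξ}.Infinite := hinf
  have hε : (0 : ℝ) < 1 / (q + 1) := by positivity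
  set ε : ℝ := 1 / (q + 1) with hεdef
  have hρ : 0 ≤ ρ := le_trans (hμpos k ⊤) (hμbdd k)
  obtain ⟨N, hN⟩ := exists_nat_gt (ρ / ε)
  obtain ⟨T, hTsub, hTcard⟩ := hinf.exists_subset_card_eq N
  have hwit : ∀ ξ : {x // x ∈ T}, P k q ξ.1 := fun ξ => hTsub ξ.2
  choose Bf sf hBsub hlub hgap using hwit
  -- finite "overlap" sets
  have hfin : ∀ ξ : {x // x ∈ T},
      (⋃ η ∈ Finset.univ.erase ξ, (Bf ξ ∩ Bf η)).Finite := by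
    intro ξ
    apply Set.Finite.biUnion (Finset.finite_toSet _)
    intro η hη
    have hne : (ξ : {ξ : Ordinal // ξ < (Cardinal.aleph 1).ord}) ≠ (η : {ξ : Ordinal // ξ < (Cardinal.aleph 1).ord}) := by
      intro h
      exact (Finset.mem_erase.mp hη).1 (Subtype.ext h.symm)
    exact (hCad _ _ hne).subset
      (Set.inter_subset_inter (hBsub ξ) (hBsub η))
  set Fs : {x // x ∈ T} → Finset ℕ := fun ξ => (hfin ξ).toFinset with hFs
  set u : {x // x ∈ T} → α := fun ξ => (Fs ξ).sup A with hu
  set v : {x // x ∈ T} → α := fun ξ => sf ξ \ u ξ with hv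
  -- v's are pairwise disjoint
  have hvdisj : ∀ ξ η : {x // x ∈ T}, ξ ≠ η → v ξ ⊓ v η = ⊥ := by
    intro ξ η hne
    have key : ∀ n ∈ Bf ξ, v η ⊓ A n = ⊥ := by
      intro n hn
      by_cases hmem : n ∈ Bf η
      · -- n is in the overlap set of η
        have hnF : n ∈ Fs η := by
          rw [hFs, Set.Finite.mem_toFinset]
          exact Set.mem_biUnion (Finset.mem_erase.mpr ⟨hne, Finset.mem_univ ξ⟩)
            ⟨hmem, hn⟩
        have hle : A n ≤ u η := Finset.le_sup hnF
        have : v η ⊓ A n ≤ (sf η \ u η) ⊓ u η := inf_le_inf_left _ hle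
        refine le_bot_iff.mp (this.trans ?_)
        simp [sdiff_inf_self_left]
      · -- A n disjoint from everything in Bf η
        have hdisj : A n ⊓ sf η = ⊥ :=
          lub_inf_bot A (Bf η) (sf η) (A n) (hlub η)
            (fun m hm => hAdisj n m (by rintro rfl; exact hmem hm))
        have hle : v η ⊓ A n ≤ sf η ⊓ A n := inf_le_inf_right _ sdiff_le
        rw [inf_comm (A n) (sf η)] at hdisj
        exact le_bot_iff.mp (hdisj ▸ hle)
    have : v η ⊓ sf ξ = ⊥ := lub_inf_bot A (Bf ξ) (sf ξ) (v η) (hlub ξ) key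
    have h2 : v ξ ⊓ v η ≤ sf ξ ⊓ v η := inf_le_inf_right _ sdiff_le
    rw [inf_comm] at this
    exact le_bot_iff.mp (this ▸ h2)
  -- each v has measure ≥ ε
  have hvbig : ∀ ξ : {x // x ∈ T}, ε ≤ μ k (v ξ) := by
    intro ξ
    have hFsub : ↑(Fs ξ) ⊆ Bf ξ := by
      simp only [hFs]
      rw [Set.Finite.coe_toFinset]
      intro n hn
      simp only [Set.mem_iUnion] at hn
      obtain ⟨η, _, hn1, _⟩ := hn
      exact hn1
    have hμu : μ k (u ξ) ≤ ∑' n : Bf ξ, μ k (A n) := by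
      rw [hu, mu_finset_sup (μ k) (hμadd k) A _ (fun i _ j _ hij => hAdisj i j hij)]
      -- sum over Fs ξ ≤ tsum over Bf ξ
      have hsumm := (summable_fact k (Bf ξ) (sf ξ) (hlub ξ)).1
      have hsummInd : Summable ((Bf ξ).indicator fun n => μ k (A n)) :=
        summable_subtype_iff_indicator.mp hsumm
      calc ∑ n ∈ Fs ξ, μ k (A n)
          = ∑ n ∈ Fs ξ, (Bf ξ).indicator (fun n => μ k (A n)) n :=
            Finset.sum_congr rfl (fun n hn =>
              (Set.indicator_of_mem (hFsub (Finset.mem_coe.mpr hn)) (fun n => μ k (A n))).symm)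
        _ ≤ ∑' n, (Bf ξ).indicator (fun n => μ k (A n)) n :=
            Summable.sum_le_tsum _ (fun i _ => Set.indicator_nonneg (fun j _ => hμpos k _) i)
              hsummInd
        _ = ∑' n : Bf ξ, μ k (A ↑n) := (tsum_subtype _ _).symm
    have hdec : μ k (sf ξ) = μ k (sf ξ ⊓ u ξ) + μ k (v ξ) := by
      rw [hv]
      rw [← hμadd k _ _ (inf_inf_sdiff _ _), sup_inf_sdiff]
    have hμinf : μ k (sf ξ ⊓ u ξ) ≤ μ k (u ξ) :=
      mu_mono (μ k) (hμpos k) (hμadd k) _ _ inf_le_right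
    have := hgap ξ
    linarith
  -- sum up
  have hsum : (N : ℝ) * ε ≤ ρ := by
    have h1 : μ k (Finset.univ.sup v) = ∑ ξ ∈ Finset.univ, μ k (v ξ) :=
      mu_finset_sup (μ k) (hμadd k) v Finset.univ
        (fun i _ j _ hij => hvdisj i j hij)
    have h2 : μ k (Finset.univ.sup v) ≤ ρ :=
      le_trans (mu_mono (μ k) (hμpos k) (hμadd k) _ _ le_top) (hμbdd k)
    have h3 : (N : ℝ) * ε ≤ ∑ ξ ∈ Finset.univ, μ k (v ξ) := by
      have hcard : (Finset.univ : Finset {x // x ∈ T}).card = N := by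
        simp [hTcard]
      calc (N : ℝ) * ε = ∑ _ξ ∈ (Finset.univ : Finset {x // x ∈ T}), ε := by
            rw [Finset.sum_const, hcard, nsmul_eq_mul]
        _ ≤ _ := Finset.sum_le_sum (fun ξ _ => hvbig ξ)
    linarith
  have : ρ / ε < N := hN
  have : ρ < N * ε := (div_lt_iff₀ hε).mp hN
  linarith
end

section
/- If F is a nowhere reaping family of infinite subsets of ℕ, then there exists a function f : ℕ → ℕ with no fixed points such that f[A] = ℕ for every A ∈ F; in particular, F is not a binary Rosenthal family. -/
/-- A family `F` of infinite subsets of `ℕ` is *nowhere reaping* if for every infinite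
`B ⊆ ℕ` such that `A ∩ B` is infinite for all `A ∈ F`, there is `C ⊆ B` such that
`A ∩ B ∩ C` and `(A ∩ B) \ C` are both infinite for all `A ∈ F`. -/
def NowhereReaping (F : Set (Set ℕ)) : Prop :=
  ∀ B : Set ℕ, B.Infinite → (∀ A ∈ F, (A ∩ B).Infinite) →
    ∃ C ⊆ B, ∀ A ∈ F, (A ∩ B ∩ C).Infinite ∧ ((A ∩ B) \ C).Infinite

/-- A *binary Rosenthal family*: a family of infinite subsets of `ℕ` such that for every
fixed-point-free `f : ℕ → ℕ` there is `A` in the family with `f[A] ∩ A = ∅`. -/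
def IsBinaryRosenthalFamily (F : Set (Set ℕ)) : Prop :=
  (∀ A ∈ F, A.Infinite) ∧
    ∀ f : ℕ → ℕ, (∀ n, f n ≠ n) → ∃ A ∈ F, f '' A ∩ A = ∅

/-- If `F` is a nowhere reaping family of infinite subsets of `ℕ`, then there is a
fixed-point-free `f : ℕ → ℕ` with `f[A] = ℕ` for every `A ∈ F`; in particular `F` is not
a binary Rosenthal family. -/
theorem nowhereReaping_not_binary_rosenthal (F : Set (Set ℕ))
    (hFinf : ∀ A ∈ F, A.Infinite) (hF : NowhereReaping F) :
    (∃ f : ℕ → ℕ, (∀ n, f n ≠ n) ∧ ∀ A ∈ F, f '' A = Set.univ) ∧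
      ¬ IsBinaryRosenthalFamily F := by
  have main : ∃ f : ℕ → ℕ, (∀ n, f n ≠ n) ∧ ∀ A ∈ F, f '' A = Set.univ := by
    rcases Set.eq_empty_or_nonempty F with hFe | ⟨A₀, hA₀⟩
    · refine ⟨fun n => n + 1, fun n => Nat.succ_ne_self n, ?_⟩
      intro A hA
      rw [hFe] at hA
      exact absurd hA (Set.notMem_empty A)
    · set Good : Set ℕ → Prop := fun D => D.Infinite ∧ ∀ A ∈ F, (A ∩ D).Infinite with hGood
      have step : ∀ D, Good D →
          ∃ C, C ⊆ D ∧ Good C ∧ ∀ A ∈ F, (A ∩ (D \ C)).Infinite := by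
        intro D hD
        obtain ⟨C, hCD, hC⟩ := hF D hD.1 hD.2
        refine ⟨C, hCD, ⟨?_, ?_⟩, ?_⟩
        · exact ((hC A₀ hA₀).1).mono (by intro x hx; exact hx.2)
        · intro A hA
          exact ((hC A hA).1).mono (by intro x hx; exact ⟨hx.1.1, hx.2⟩)
        · intro A hA
          exact ((hC A hA).2).mono (by intro x hx; exact ⟨hx.1.1, hx.1.2, hx.2⟩)
      have good_univ : Good Set.univ := by
        refine ⟨Set.infinite_univ, fun A hA => ?_⟩
        rw [Set.inter_univ]; exact hFinf A hA
      let D : ℕ → {D : Set ℕ // Good D} := fun n =>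
        Nat.rec ⟨Set.univ, good_univ⟩
          (fun _ p => ⟨(step p.1 p.2).choose, (step p.1 p.2).choose_spec.2.1⟩) n
      let B : ℕ → Set ℕ := fun n => (D n).1 \ (D (n + 1)).1
      have hDstep : ∀ n, (D (n + 1)).1 ⊆ (D n).1 := fun n =>
        (step (D n).1 (D n).2).choose_spec.1
      have hB : ∀ A ∈ F, ∀ n, (A ∩ B n).Infinite := by
        intro A hA n
        exact (step (D n).1 (D n).2).choose_spec.2.2 A hA
      have hDmono : ∀ {n m : ℕ}, n ≤ m → (D m).1 ⊆ (D n).1 := by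
        intro n m h
        induction h with
        | refl => exact fun x hx => hx
        | step h ih => exact fun x hx => ih (hDstep _ hx)
      have hBdisj : ∀ {n m : ℕ}, n ≠ m → ∀ x, x ∈ B n → x ∈ B m → False := by
        have key : ∀ {n m : ℕ}, n < m → ∀ x, x ∈ B n → x ∈ B m → False := by
          intro n m h x hxn hxm
          exact hxn.2 (hDmono h hxm.1)
        intro n m h x hxn hxm
        rcases lt_or_gt_of_ne h with h' | h'
        · exact key h' x hxn hxm
        · exact key h' x hxm hxn
      classical
      refine ⟨fun x => if h : ∃ m, x ∈ B m ∧ x ≠ m then h.choose else x + 1, ?_, ?_⟩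
      · intro x
        by_cases h : ∃ m, x ∈ B m ∧ x ≠ m
        · simp only [dif_pos h]
          exact fun he => h.choose_spec.2 he.symm
        · simp only [dif_neg h]
          exact Nat.succ_ne_self x
      · intro A hA
        apply Set.eq_univ_of_forall
        intro m
        have : ((A ∩ B m) \ ({m} : Set ℕ)).Nonempty :=
          ((hB A hA m).diff (Set.finite_singleton m)).nonempty
        obtain ⟨x, ⟨hxA, hxB⟩, hxm⟩ := this
        have hxm' : x ≠ m := by simpa using hxm
        have h : ∃ k, x ∈ B k ∧ x ≠ k := ⟨m, hxB, hxm'⟩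
        refine ⟨x, hxA, ?_⟩
        simp only [dif_pos h]
        by_contra hne
        exact hBdisj hne x h.choose_spec.1 hxB
  refine ⟨main, ?_⟩
  rintro ⟨hinf, hros⟩
  obtain ⟨f, hf, hsurj⟩ := main
  obtain ⟨A, hA, hAe⟩ := hros f hf
  rw [hsurj A hA, Set.univ_inter] at hAe
  exact ((hFinf A hA).nonempty).ne_empty hAe
end

section
/- No Rosenthal family of cardinality smaller than the ultrafilter number 𝔲 has the strong finite intersection property; consequently no binary Rosenthal family of cardinality smaller than 𝔲 has the strong finite intersection property. -/
/-- A *Rosenthal family*: a family of infinite subsets of `ℕ` such that every Rosenthal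
matrix is `ε`-fragmented by some member of the family, for every `ε > 0`. -/
def IsRosenthalFamily (F : Set (Set ℕ)) : Prop :=
  (∀ A ∈ F, A.Infinite) ∧
    ∀ M : ℕ → ℕ → ℝ, IsRosenthalMatrix M → ∀ ε : ℝ, 0 < ε → ∃ A ∈ F, Fragments M ε A

/-- `F` has the strong finite intersection property: every finite subfamily has infinite
intersection. -/
def SFIP (F : Set (Set ℕ)) : Prop :=
  ∀ G : Finset (Set ℕ), ↑G ⊆ F → (⋂₀ (G : Set (Set ℕ))).Infinite

/-- The ultrafilter number `𝔲`: the minimal cardinality of a base of a nonprincipal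
ultrafilter on `ℕ`. -/
noncomputable def ultrafilterNumber : Cardinal :=
  sInf {c | ∃ u : Ultrafilter ℕ, (u : Filter ℕ) ≤ Filter.cofinite ∧
    ∃ B : Set (Set ℕ), (∀ b ∈ B, b ∈ u) ∧ (∀ X ∈ u, ∃ b ∈ B, b ⊆ X) ∧
      Cardinal.mk B = c}

namespace RosenthalAux

/-! ### No nonprincipal ultrafilter has a countable base -/

theorem no_countable_base (u : Ultrafilter ℕ) (hu : (u : Filter ℕ) ≤ Filter.cofinite)
    (B : Set (Set ℕ)) (h1 : ∀ b ∈ B, b ∈ u) (h2 : ∀ X ∈ u, ∃ b ∈ B, b ⊆ X) :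
    ¬ (Cardinal.mk B ≤ Cardinal.aleph0) := by
  intro hc
  -- members of u are infinite
  have hmem_inf : ∀ s ∈ u, s.Infinite := by
    intro s hs
    by_contra hinf
    rw [Set.not_infinite] at hinf
    have hfin := hinf
    have hsc : sᶜ ∈ u := hu (by simpa [Filter.mem_cofinite] using hfin)
    have : (∅ : Set ℕ) ∈ (u : Filter ℕ) := by
      simpa using Filter.inter_mem hs hsc
    exact Filter.empty_notMem (u : Filter ℕ) this
  -- enumerate B
  have hBne : B.Nonempty := by
    obtain ⟨b, hb, -⟩ := h2 Set.univ Filter.univ_mem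
    exact ⟨b, hb⟩
  have hBc : B.Countable := by
    have : Countable ↥B := Cardinal.mk_le_aleph0_iff.1 hc
    exact Set.countable_coe_iff.2 this
  obtain ⟨e, he⟩ := hBc.exists_eq_range hBne
  have heu : ∀ n, e n ∈ u := fun n => h1 _ (he ▸ ⟨n, rfl⟩)
  -- finite intersections
  set P : ℕ → Set ℕ := fun n => ⋂ i ∈ Finset.range (n + 1), e i with hP
  have hPu : ∀ n, P n ∈ u := by
    intro n
    exact (Filter.biInter_finset_mem _).2 fun i _ => heu i
  have hPinf : ∀ n, (P n).Infinite := fun n => hmem_inf _ (hPu n)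
  have hPsub : ∀ n, P n ⊆ e n := fun n =>
    Set.biInter_subset_of_mem (by simp : n ∈ Finset.range (n + 1))
  -- picking two fresh points
  have hpick : ∀ (n : ℕ) (s : Finset ℕ), ∃ p : ℕ × ℕ,
      p.1 ∈ P n ∧ p.2 ∈ P n ∧ p.1 ≠ p.2 ∧ p.1 ∉ s ∧ p.2 ∉ s := by
    intro n s
    have h1' : ((P n) \ ↑s).Infinite := (hPinf n).diff s.finite_toSet
    obtain ⟨x, hx⟩ := h1'.nonempty
    have h2' : (((P n) \ ↑s) \ {x}).Infinite := h1'.diff (Set.finite_singleton x)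
    obtain ⟨y, hy⟩ := h2'.nonempty
    refine ⟨(y, x), hy.1.1, hx.1, ?_, hy.1.2, hx.2⟩
    intro h; exact hy.2 (by simpa using h)
  classical
  let pk : ℕ → Finset ℕ → ℕ × ℕ := fun n s => Classical.choose (hpick n s)
  let Acc : ℕ → Finset ℕ := fun n =>
    Nat.rec ∅ (fun m s => insert (pk m s).1 (insert (pk m s).2 s)) n
  have hAccSucc : ∀ n, Acc (n + 1) = insert (pk n (Acc n)).1 (insert (pk n (Acc n)).2 (Acc n)) :=
    fun n => rfl
  let a : ℕ → ℕ := fun n => (pk n (Acc n)).1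
  let b : ℕ → ℕ := fun n => (pk n (Acc n)).2
  have hspec : ∀ n, a n ∈ P n ∧ b n ∈ P n ∧ a n ≠ b n ∧ a n ∉ Acc n ∧ b n ∉ Acc n :=
    fun n => Classical.choose_spec (hpick n (Acc n))
  have hAccStep : ∀ n, Acc n ⊆ Acc (n + 1) := by
    intro n
    rw [hAccSucc]
    exact (Finset.subset_insert _ _).trans (Finset.subset_insert _ _)
  have hAccMono : ∀ m n, m ≤ n → Acc m ⊆ Acc n := by
    intro m n hmn
    induction n with
    | zero =>
      have : m = 0 := Nat.le_zero.1 hmn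
      simp [this]
    | succ k ih =>
      rcases Nat.lt_or_ge m (k + 1) with h | h
      · exact (ih (Nat.lt_succ_iff.1 h)).trans (hAccStep k)
      · have : m = k + 1 := le_antisymm hmn h
        simp [this]
  have hmemAcc : ∀ n, a n ∈ Acc (n + 1) ∧ b n ∈ Acc (n + 1) := by
    intro n
    rw [hAccSucc]
    constructor
    · exact Finset.mem_insert_self _ _
    · exact Finset.mem_insert_of_mem (Finset.mem_insert_self _ _)
  -- b m is never equal to a j
  have hb_notin : ∀ m j, b m ≠ a j := by
    intro m j
    rcases lt_trichotomy j m with h | h | h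
    · intro hEq
      have haj : a j ∈ Acc m := hAccMono (j + 1) m h ((hmemAcc j).1)
      exact (hspec m).2.2.2.2 (hEq ▸ haj)
    · intro hEq
      rw [h] at hEq
      exact (hspec m).2.2.1 hEq.symm
    · intro hEq
      have hbm : b m ∈ Acc j := hAccMono (m + 1) j h ((hmemAcc m).2)
      rw [hEq] at hbm
      exact (hspec j).2.2.2.1 hbm
  set X : Set ℕ := Set.range a with hX
  rcases u.mem_or_compl_mem X with hXu | hXu
  · obtain ⟨bb, hbB, hbX⟩ := h2 X hXu
    obtain ⟨m, rfl⟩ : ∃ m, e m = bb := by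
      have : bb ∈ Set.range e := he ▸ hbB
      obtain ⟨m, hm⟩ := this
      exact ⟨m, hm⟩
    have : b m ∈ X := hbX (hPsub m (hspec m).2.1)
    obtain ⟨j, hj⟩ := this
    exact hb_notin m j hj.symm
  · obtain ⟨bb, hbB, hbX⟩ := h2 Xᶜ hXu
    obtain ⟨m, rfl⟩ : ∃ m, e m = bb := by
      have : bb ∈ Set.range e := he ▸ hbB
      obtain ⟨m, hm⟩ := this
      exact ⟨m, hm⟩
    have : a m ∈ Xᶜ := hbX (hPsub m (hspec m).1)
    exact this ⟨m, rfl⟩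

/-! ### Positivity machinery -/

/-- Tail-restricted finite intersections of members of `F`. -/
def Cb (F : Set (Set ℕ)) (𝒢 : Finset ↥F) (k : ℕ) : Set ℕ :=
  ⋂₀ (Subtype.val '' (↑𝒢 : Set ↥F)) ∩ {m | k ≤ m}

/-- A set is positive if it meets every tail-restricted finite intersection infinitely. -/
def Pos (F : Set (Set ℕ)) (V : Set ℕ) : Prop :=
  ∀ (𝒢 : Finset ↥F) (k : ℕ), (V ∩ Cb F 𝒢 k).Infinite

theorem Cb_infinite {F : Set (Set ℕ)} (hS : SFIP F) (𝒢 : Finset ↥F) (k : ℕ) :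
    (Cb F 𝒢 k).Infinite := by
  classical
  have hsub : ↑(𝒢.image (Subtype.val)) ⊆ F := by
    intro x hx
    rw [Finset.coe_image] at hx
    obtain ⟨a, -, rfl⟩ := hx
    exact a.2
  have hinter := hS (𝒢.image (Subtype.val)) hsub
  have hcoe : (↑(𝒢.image (Subtype.val)) : Set (Set ℕ)) = Subtype.val '' (↑𝒢 : Set ↥F) :=
    Finset.coe_image
  rw [hcoe] at hinter
  have hEq : Cb F 𝒢 k = (⋂₀ (Subtype.val '' (↑𝒢 : Set ↥F))) \ (Set.Iio k) := by
    ext x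
    simp [Cb, Set.mem_Iio, not_lt]
  rw [hEq]
  exact hinter.diff (Set.finite_Iio k)

theorem pos_mono {F : Set (Set ℕ)} {V V' : Set ℕ} (h : V ⊆ V') (hV : Pos F V) : Pos F V' :=
  fun 𝒢 k => (hV 𝒢 k).mono (Set.inter_subset_inter_left _ h)

theorem pos_inf {F : Set (Set ℕ)} {V : Set ℕ} (hV : Pos F V) : V.Infinite :=
  (hV ∅ 0).mono Set.inter_subset_left

theorem pos_univ {F : Set (Set ℕ)} (hS : SFIP F) : Pos F Set.univ := by
  intro 𝒢 k
  simpa [Set.univ_inter] using Cb_infinite hS 𝒢 k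

theorem pos_inter_mem {F : Set (Set ℕ)} {V : Set ℕ} (hV : Pos F V) {A : Set ℕ} (hA : A ∈ F) :
    (V ∩ A).Infinite := by
  classical
  have h := hV {⟨A, hA⟩} 0
  refine h.mono (Set.inter_subset_inter_right _ ?_)
  intro x hx
  have hx1 := hx.1
  rw [Finset.coe_singleton, Set.image_singleton, Set.sInter_singleton] at hx1
  exact hx1

theorem Cb_mono {F : Set (Set ℕ)} {𝒢 𝒢' : Finset ↥F} {k k' : ℕ}
    (h : 𝒢 ⊆ 𝒢') (hk : k ≤ k') : Cb F 𝒢' k' ⊆ Cb F 𝒢 k := by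
  intro x hx
  constructor
  · exact Set.sInter_subset_sInter (Set.image_mono (by exact_mod_cast h)) hx.1
  · exact le_trans hk hx.2

theorem pos_union_elim {F : Set (Set ℕ)} {X Y : Set ℕ} (h : Pos F (X ∪ Y)) :
    Pos F X ∨ Pos F Y := by
  classical
  by_contra hcon
  push_neg at hcon
  obtain ⟨hX, hY⟩ := hcon
  simp only [Pos, not_forall] at hX hY
  obtain ⟨𝒢₁, k₁, h₁⟩ := hX
  obtain ⟨𝒢₂, k₂, h₂⟩ := hY
  rw [Set.not_infinite] at h₁ h₂
  have hsub : (X ∪ Y) ∩ Cb F (𝒢₁ ∪ 𝒢₂) (max k₁ k₂) ⊆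
      (X ∩ Cb F 𝒢₁ k₁) ∪ (Y ∩ Cb F 𝒢₂ k₂) := by
    rintro x ⟨hxy, hC⟩
    rcases hxy with hx | hy
    · exact Or.inl ⟨hx, Cb_mono Finset.subset_union_left (le_max_left _ _) hC⟩
    · exact Or.inr ⟨hy, Cb_mono Finset.subset_union_right (le_max_right _ _) hC⟩
  have := h (𝒢₁ ∪ 𝒢₂) (max k₁ k₂)
  exact this ((h₁.union h₂).subset hsub)

theorem pos_split {F : Set (Set ℕ)} {W : Set ℕ} (hW : Pos F W) (Z : Set ℕ) :
    Pos F (W ∩ Z) ∨ Pos F (W \ Z) := by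
  apply pos_union_elim
  rwa [Set.inter_union_diff]

/-! ### The atom case: an ultrafilter with a small base -/

theorem atom_case {F : Set (Set ℕ)} {W : Set ℕ} (hWpos : Pos F W)
    (hatom : ∀ Z, Pos F (W ∩ Z) → ¬ Pos F (W \ Z)) :
    ∃ (u : Ultrafilter ℕ), (u : Filter ℕ) ≤ Filter.cofinite ∧
      ∃ B : Set (Set ℕ), (∀ b ∈ B, b ∈ u) ∧ (∀ X ∈ u, ∃ b ∈ B, b ⊆ X) ∧
        Cardinal.mk B ≤ Cardinal.mk (List ↥F × ℕ) := by
  classical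
  let 𝔉 : Filter ℕ :=
    { sets := {Y | ¬ Pos F (W \ Y)}
      univ_sets := by
        simp only [Set.mem_setOf_eq, Set.diff_univ]
        intro hP
        exact (Set.not_infinite.2 Set.finite_empty) (pos_inf hP)
      sets_of_superset := by
        intro Y Y' hY hYY'
        simp only [Set.mem_setOf_eq] at hY ⊢
        intro hP
        exact hY (pos_mono (Set.diff_subset_diff_right hYY') hP)
      inter_sets := by
        intro Y Y' hY hY'
        simp only [Set.mem_setOf_eq] at hY hY' ⊢
        intro hP
        rw [Set.diff_inter] at hP
        rcases pos_union_elim hP with h | h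
        · exact hY h
        · exact hY' h }
  have hmem : ∀ Y : Set ℕ, Y ∈ 𝔉 ↔ ¬ Pos F (W \ Y) := fun Y => Iff.rfl
  have hcompl : ∀ s : Set ℕ, sᶜ ∉ 𝔉 ↔ s ∈ 𝔉 := by
    intro s
    rw [hmem, hmem, not_not]
    constructor
    · intro h
      rw [Set.diff_compl] at h
      exact hatom s h
    · intro h
      rw [Set.diff_compl]
      rcases pos_split hWpos s with h1 | h1
      · exact h1
      · exact absurd h1 h
  refine ⟨Ultrafilter.ofComplNotMemIff 𝔉 hcompl, ?_, ?_⟩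
  · intro s hs
    rw [Filter.mem_cofinite] at hs
    show s ∈ 𝔉
    rw [hmem]
    intro hP
    exact (Set.not_infinite.2 (hs.subset (fun x hx => hx.2))) (pos_inf hP)
  · refine ⟨Set.range (fun p : List ↥F × ℕ => W ∩ Cb F p.1.toFinset p.2), ?_, ?_,
      Cardinal.mk_range_le⟩
    · intro b hb
      obtain ⟨p, rfl⟩ := hb
      show _ ∈ 𝔉
      rw [hmem]
      intro hP
      have hinf := hP p.1.toFinset p.2
      have hempty : (W \ (W ∩ Cb F p.1.toFinset p.2)) ∩ Cb F p.1.toFinset p.2 = ∅ := by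
        apply Set.eq_empty_iff_forall_notMem.2
        rintro x ⟨⟨hxW, hxn⟩, hxC⟩
        exact hxn ⟨hxW, hxC⟩
      rw [hempty] at hinf
      exact (Set.not_infinite.2 Set.finite_empty) hinf
    · intro X hX
      have hX' : ¬ Pos F (W \ X) := hX
      simp only [Pos, not_forall] at hX'
      obtain ⟨𝒢, k, hfin⟩ := hX'
      rw [Set.not_infinite] at hfin
      obtain ⟨m, hm⟩ := hfin.bddAbove
      refine ⟨W ∩ Cb F 𝒢 (max k (m + 1)),
        ⟨(𝒢.toList, max k (m + 1)), by
          show W ∩ Cb F 𝒢.toList.toFinset (max k (m + 1)) = _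
          rw [Finset.toList_toFinset]⟩, ?_⟩
      intro x hx
      by_contra hxX
      have hxS : x ∈ (W \ X) ∩ Cb F 𝒢 k :=
        ⟨⟨hx.1, hxX⟩, Cb_mono (Finset.Subset.refl _) (le_max_left _ _) hx.2⟩
      have hle : x ≤ m := hm hxS
      have hge : max k (m + 1) ≤ x := hx.2.2
      omega

/-! ### The splitting case: a fixed-point-free function with no free member -/

theorem split_case {F : Set (Set ℕ)} (hS : SFIP F)
    (hbin : ∀ f : ℕ → ℕ, (∀ n, f n ≠ n) → ∃ A ∈ F, f '' A ∩ A = ∅)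
    (hsplit : ∀ W : Set ℕ, Pos F W → ∃ Z, Pos F (W ∩ Z) ∧ Pos F (W \ Z)) : False := by
  classical
  -- a decreasing sequence of positive sets with positive differences
  let T : ℕ → {W : Set ℕ // Pos F W} := fun n =>
    Nat.rec ⟨Set.univ, pos_univ hS⟩
      (fun _ p => ⟨p.1 \ Classical.choose (hsplit p.1 p.2),
        (Classical.choose_spec (hsplit p.1 p.2)).2⟩) n
  let V : ℕ → Set ℕ := fun n => (T n).1 ∩ Classical.choose (hsplit (T n).1 (T n).2)
  have hVpos : ∀ n, Pos F (V n) := fun n => (Classical.choose_spec (hsplit (T n).1 (T n).2)).1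
  have hTsucc : ∀ n, (T (n + 1)).1 = (T n).1 \ Classical.choose (hsplit (T n).1 (T n).2) :=
    fun n => rfl
  have hTstep : ∀ n, (T (n + 1)).1 ⊆ (T n).1 := by
    intro n; rw [hTsucc]; exact Set.diff_subset
  have hTmono : ∀ m n, m ≤ n → (T n).1 ⊆ (T m).1 := by
    intro m n hmn
    induction n with
    | zero =>
      have h0 : m = 0 := Nat.le_zero.1 hmn
      subst h0; exact Set.Subset.refl _
    | succ k ih =>
      rcases Nat.lt_or_ge m (k + 1) with h | h
      · exact (hTstep k).trans (ih (Nat.lt_succ_iff.1 h))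
      · have h1 : m = k + 1 := le_antisymm hmn h
        subst h1; exact Set.Subset.refl _
  have hVdisj : ∀ i j, i < j → ∀ x, x ∈ V i → x ∈ V j → False := by
    intro i j hij x hxi hxj
    have hxj' : x ∈ (T j).1 := hxj.1
    have hxi1 : x ∈ (T (i + 1)).1 := hTmono (i + 1) j hij hxj'
    rw [hTsucc] at hxi1
    exact hxi1.2 hxi.2
  have hVdisj' : ∀ i j, i ≠ j → ∀ x, x ∈ V i → x ∈ V j → False := by
    intro i j hij x hxi hxj
    rcases lt_or_gt_of_ne hij with h | h
    · exact hVdisj i j h x hxi hxj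
    · exact hVdisj j i h x hxj hxi
  -- an enumeration of V 0
  haveI hinf0 : Infinite ↥(V 0) := (pos_inf (hVpos 0)).to_subtype
  obtain ⟨eqv⟩ : Nonempty (↥(V 0) ≃ ℕ) := nonempty_equiv_of_countable
  let w : ℕ → ↥(V 0) := fun n => eqv.symm n
  have hwmem : ∀ n, (↑(w n) : ℕ) ∈ V 0 := fun n => (w n).2
  have hwinj : Function.Injective (fun n => (↑(w n) : ℕ)) := by
    intro m n h
    have h1 : w m = w n := Subtype.coe_injective h
    exact eqv.symm.injective h1
  -- the killer function
  let f : ℕ → ℕ := fun x =>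
    if h : ∃ m, x ∈ V (m + 1) then ↑(w (Classical.choose h + 1))
    else if x = ↑(w 0) then ↑(w 1) else ↑(w 0)
  have hfdef : ∀ x, f x =
      if h : ∃ m, x ∈ V (m + 1) then ↑(w (Classical.choose h + 1))
      else if x = ↑(w 0) then ↑(w 1) else ↑(w 0) := fun _ => rfl
  have hfpf : ∀ x, f x ≠ x := by
    intro x
    rw [hfdef]
    by_cases h : ∃ m, x ∈ V (m + 1)
    · rw [dif_pos h]
      intro hEq
      have hx : x ∈ V (Classical.choose h + 1) := Classical.choose_spec h
      have hw : (↑(w (Classical.choose h + 1)) : ℕ) ∈ V 0 := hwmem _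
      rw [hEq] at hw
      exact hVdisj' 0 (Classical.choose h + 1) (by omega) x hw hx
    · rw [dif_neg h]
      by_cases hx0 : x = ↑(w 0)
      · rw [if_pos hx0]
        intro hEq
        have h10 : (1 : ℕ) = 0 := hwinj (hEq.trans hx0)
        omega
      · rw [if_neg hx0]
        intro hEq
        exact hx0 hEq.symm
  obtain ⟨A, hAF, hfree⟩ := hbin f hfpf
  have hfree' : ∀ x ∈ A, f x ∉ A := by
    intro x hx hfx
    have hmem : f x ∈ f '' A ∩ A := ⟨⟨x, hx, rfl⟩, hfx⟩
    rw [hfree] at hmem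
    exact hmem
  have hwx : ∀ n, (↑(w (n + 1)) : ℕ) ∉ A := by
    intro n
    obtain ⟨x, hxV, hxA⟩ := (pos_inter_mem (hVpos (n + 1)) hAF).nonempty
    have hex : ∃ m, x ∈ V (m + 1) := ⟨n, hxV⟩
    have hch : Classical.choose hex = n := by
      by_contra hne'
      exact hVdisj' (Classical.choose hex + 1) (n + 1) (by omega) x
        (Classical.choose_spec hex) hxV
    have hfx : f x = ↑(w (n + 1)) := by
      rw [hfdef, dif_pos hex, hch]
    intro hwA
    apply hfree' x hxA
    rw [hfx]
    exact hwA
  -- A ∩ V 0 is infinite but contained in a singleton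
  have hAV0 : (V 0 ∩ A).Infinite := pos_inter_mem (hVpos 0) hAF
  have hsub : V 0 ∩ A ⊆ {(↑(w 0) : ℕ)} := by
    rintro y ⟨hyV, hyA⟩
    have hym : y = ↑(w (eqv ⟨y, hyV⟩)) := by
      show y = ↑(eqv.symm (eqv ⟨y, hyV⟩))
      rw [Equiv.symm_apply_apply]
    rcases Nat.eq_zero_or_pos (eqv ⟨y, hyV⟩) with h0 | hpos
    · rw [h0] at hym
      simp [hym]
    · obtain ⟨m', hm'⟩ : ∃ m', eqv ⟨y, hyV⟩ = m' + 1 := ⟨eqv ⟨y, hyV⟩ - 1, by omega⟩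
      rw [hm'] at hym
      rw [hym] at hyA
      exact absurd hyA (hwx m')
  exact hAV0 ((Set.finite_singleton _).subset hsub)

/-! ### The core theorem -/

theorem binary_core (F : Set (Set ℕ)) (hbin : IsBinaryRosenthalFamily F)
    (hlt : Cardinal.mk F < ultrafilterNumber) : ¬ SFIP F := by
  intro hS
  classical
  by_cases hsplit : ∀ W : Set ℕ, Pos F W → ∃ Z, Pos F (W ∩ Z) ∧ Pos F (W \ Z)
  · exact split_case hS hbin.2 hsplit
  · push_neg at hsplit
    obtain ⟨W, hWpos, hatom⟩ := hsplit
    obtain ⟨u, hule, B, hB1, hB2, hcard⟩ := atom_case hWpos hatom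
    have hmemS : Cardinal.mk ↥B ∈ {c | ∃ u : Ultrafilter ℕ, (u : Filter ℕ) ≤ Filter.cofinite ∧
        ∃ B : Set (Set ℕ), (∀ b ∈ B, b ∈ u) ∧ (∀ X ∈ u, ∃ b ∈ B, b ⊆ X) ∧
          Cardinal.mk B = c} := ⟨u, hule, B, hB1, hB2, rfl⟩
    have hle1 : ultrafilterNumber ≤ Cardinal.mk ↥B := csInf_le' hmemS
    have hnc : ¬ (Cardinal.mk ↥B ≤ Cardinal.aleph0) := no_countable_base u hule B hB1 hB2
    have hlist : Cardinal.mk (List ↥F) ≤ max Cardinal.aleph0 (Cardinal.mk ↥F) :=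
      Cardinal.mk_list_le_max ↥F
    have hprod : Cardinal.mk (List ↥F × ℕ) = Cardinal.mk (List ↥F) * Cardinal.aleph0 := by
      rw [Cardinal.mk_prod, Cardinal.lift_id, Cardinal.lift_id, Cardinal.mk_nat]
    rcases le_or_gt (Cardinal.mk ↥F) Cardinal.aleph0 with hk | hk
    · apply hnc
      calc Cardinal.mk ↥B ≤ Cardinal.mk (List ↥F × ℕ) := hcard
        _ = Cardinal.mk (List ↥F) * Cardinal.aleph0 := hprod
        _ ≤ max Cardinal.aleph0 (Cardinal.mk ↥F) * Cardinal.aleph0 := mul_le_mul_left hlist _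
        _ = Cardinal.aleph0 * Cardinal.aleph0 := by rw [max_eq_left hk]
        _ = Cardinal.aleph0 := Cardinal.aleph0_mul_aleph0
    · have h1 : Cardinal.mk ↥B ≤ Cardinal.mk ↥F := by
        calc Cardinal.mk ↥B ≤ Cardinal.mk (List ↥F × ℕ) := hcard
          _ = Cardinal.mk (List ↥F) * Cardinal.aleph0 := hprod
          _ ≤ max Cardinal.aleph0 (Cardinal.mk ↥F) * Cardinal.aleph0 := mul_le_mul_left hlist _
          _ = Cardinal.mk ↥F * Cardinal.aleph0 := by rw [max_eq_right hk.le]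
          _ = max (Cardinal.mk ↥F) Cardinal.aleph0 := Cardinal.mul_eq_max hk.le le_rfl
          _ = Cardinal.mk ↥F := max_eq_left hk.le
      exact absurd (lt_of_le_of_lt (hle1.trans h1) hlt) (lt_irrefl _)

/-! ### Every Rosenthal family is a binary Rosenthal family -/

theorem rosenthal_to_binary {F : Set (Set ℕ)} (h : IsRosenthalFamily F) :
    IsBinaryRosenthalFamily F := by
  refine ⟨h.1, ?_⟩
  intro f hf
  classical
  set M : ℕ → ℕ → ℝ := fun k n => if n = f k then 1 else 0 with hM
  have hnn : ∀ k n, (0 : ℝ) ≤ M k n := by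
    intro k n
    by_cases hkn : n = f k <;> simp [hM, hkn]
  have hzero : ∀ k, ∀ b ∉ ({f k} : Finset ℕ), M k b = 0 := by
    intro k b hb
    simp only [Finset.mem_singleton] at hb
    simp [hM, hb]
  have hsummable : ∀ k, Summable (M k) := fun k => summable_of_ne_finset_zero (hzero k)
  have htsum : ∀ k, ∑' n, M k n = 1 := by
    intro k
    rw [tsum_eq_single (f k) (fun b hb => by simp [hM, hb])]
    simp [hM]
  have hRos : IsRosenthalMatrix M := by
    refine ⟨hnn, hsummable, ⟨1, ?_⟩⟩
    rintro y ⟨k, rfl⟩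
    show ∑' n, M k n ≤ 1
    rw [htsum k]
  obtain ⟨A, hAF, hfrag⟩ := h.2 M hRos (1 / 2) (by norm_num)
  refine ⟨A, hAF, ?_⟩
  apply Set.eq_empty_iff_forall_notMem.2
  rintro y ⟨⟨x, hxA, rfl⟩, hfxA⟩
  have hmem : f x ∈ (A \ {x} : Set ℕ) := ⟨hfxA, hf x⟩
  have hsum := hfrag x hxA
  have hts : ∑' n : (A \ {x} : Set ℕ), M x ↑n = 1 := by
    rw [tsum_eq_single (⟨f x, hmem⟩ : ↥(A \ {x} : Set ℕ)) ?_]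
    · simp [hM]
    · intro b hb
      show M x ↑b = 0
      simp only [hM, ite_eq_right_iff]
      intro hbfx
      exact absurd (Subtype.ext hbfx) hb
  rw [hts] at hsum
  norm_num at hsum

end RosenthalAux

/-- No Rosenthal family of cardinality smaller than `𝔲` has the strong finite intersection
property; consequently the same holds for binary Rosenthal families. -/
theorem no_small_rosenthal_family_with_sfip :
    (∀ F : Set (Set ℕ), IsRosenthalFamily F → Cardinal.mk F < ultrafilterNumber → ¬ SFIP F) ∧
      (∀ F : Set (Set ℕ), IsBinaryRosenthalFamily F → Cardinal.mk F < ultrafilterNumber →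
        ¬ SFIP F) := by
  constructor
  · intro F hR hlt
    exact RosenthalAux.binary_core F (RosenthalAux.rosenthal_to_binary hR) hlt
  · intro F hB hlt
    exact RosenthalAux.binary_core F hB hlt
end

section
/- The reaping number 𝔯 is less than or equal to the binary Rosenthal number ros_01. -/
/-- The binary Rosenthal number `ros_01`: the minimal cardinality of a binary Rosenthal
family. -/
noncomputable def binaryRosenthalNumber : Cardinal :=
  sInf {c | ∃ F : Set (Set ℕ), IsBinaryRosenthalFamily F ∧ Cardinal.mk F = c}

/-- The reaping number `𝔯`: the minimal cardinality of a family `F` of infinite subsets of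
`ℕ` such that no single `X ⊆ ℕ` splits all members of `F` (i.e. there is no `X` with both
`A ∩ X` and `A \ X` infinite for all `A ∈ F`). -/
noncomputable def reapingNumber : Cardinal :=
  sInf {c | ∃ F : Set (Set ℕ), (∀ A ∈ F, A.Infinite) ∧
    (¬ ∃ X : Set ℕ, ∀ A ∈ F, (A ∩ X).Infinite ∧ (A \ X).Infinite) ∧ Cardinal.mk F = c}




/-- Simple iteration helper. -/
def natIter {α : Sort*} (step : α → α) (init : α) : ℕ → α
  | 0 => init
  | n + 1 => step (natIter step init n)

/-- Helper: any fixed-point-free `f : ℕ → ℕ` admits an infinite free set. -/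
lemma exists_free_set (f : ℕ → ℕ) (hf : ∀ n, f n ≠ n) :
    ∃ A : Set ℕ, A.Infinite ∧ f '' A ∩ A = ∅ := by
  classical
  by_cases hv : ∃ v, (f ⁻¹' {v}).Infinite
  · obtain ⟨v, hvi⟩ := hv
    refine ⟨f ⁻¹' {v}, hvi, ?_⟩
    ext x
    simp only [Set.mem_inter_iff, Set.mem_image, Set.mem_preimage, Set.mem_singleton_iff,
      Set.mem_empty_iff_false, iff_false, not_and]
    rintro ⟨y, hy, rfl⟩ hx
    rw [hy] at hx
    exact hf v hx
  · push_neg at hv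
    have hfin : ∀ v, (f ⁻¹' {v}).Finite := fun v => hv v
    -- greedy construction
    have hpre : ∀ s : Finset ℕ, (f ⁻¹' ↑s).Finite := by
      intro s
      have : f ⁻¹' ↑s = ⋃ v ∈ s, f ⁻¹' {v} := by
        ext x; simp
      rw [this]
      exact Set.Finite.biUnion s.finite_toSet (fun v _ => hfin v)
    let bad : Finset ℕ → Set ℕ := fun s =>
      ((↑s ∪ f '' ↑s) ∪ f ⁻¹' ↑s) ∪ {x | x ≤ s.sup id}
    have hbad : ∀ s, (bad s).Finite := by
      intro s
      refine (((s.finite_toSet.union (s.finite_toSet.image f)).union (hpre s)).union ?_)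
      exact Set.finite_Iic (s.sup id)
    let nxt : Finset ℕ → ℕ := fun s => sInf (bad s)ᶜ
    have hnxt : ∀ s, nxt s ∈ (bad s)ᶜ := by
      intro s
      exact Nat.sInf_mem ((hbad s).infinite_compl.nonempty)
    let chosen : ℕ → Finset ℕ := natIter (fun s => insert (nxt s) s) ∅
    let a : ℕ → ℕ := fun n => nxt (chosen n)
    have hstep : ∀ n, chosen (n + 1) = insert (a n) (chosen n) := fun n => rfl
    have hmono : ∀ m n, m ≤ n → chosen m ⊆ chosen n := by
      have hm : Monotone chosen :=
        monotone_nat_of_le_succ (fun n => by rw [hstep n]; exact Finset.subset_insert _ _)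
      exact fun m n h => hm h
    have hmem : ∀ m n, m < n → a m ∈ chosen n := by
      intro m n h
      have h1 : a m ∈ chosen (m + 1) := by rw [hstep m]; exact Finset.mem_insert_self _ _
      exact hmono (m + 1) n h h1
    have hspec : ∀ n, (a n ∉ (chosen n : Set ℕ)) ∧ (a n ∉ f '' (chosen n : Set ℕ)) ∧
        (f (a n) ∉ (chosen n : Set ℕ)) ∧ ¬(a n ≤ (chosen n).sup id) := by
      intro n
      have h := hnxt (chosen n)
      simp only [bad, Set.mem_compl_iff, Set.mem_union, not_or, Set.mem_preimage,
        Set.mem_setOf_eq] at h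
      exact ⟨h.1.1.1, h.1.1.2, h.1.2, h.2⟩
    have hlt : ∀ m n, m < n → a m < a n := by
      intro m n h
      have h1 : a m ∈ chosen n := hmem m n h
      have h2 : a m ≤ (chosen n).sup id := Finset.le_sup (f := id) h1
      have h3 := (hspec n).2.2.2
      omega
    have hinj : Function.Injective a := by
      intro m n h
      rcases lt_trichotomy m n with hc | hc | hc
      · exact absurd h (Nat.ne_of_lt (hlt m n hc))
      · exact hc
      · exact absurd h.symm (Nat.ne_of_lt (hlt n m hc))
    refine ⟨Set.range a, Set.infinite_range_of_injective hinj, ?_⟩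
    ext z
    simp only [Set.mem_inter_iff, Set.mem_image, Set.mem_range,
      Set.mem_empty_iff_false, iff_false, not_and]
    rintro ⟨y, ⟨i, rfl⟩, rfl⟩ ⟨j, hj⟩
    rcases lt_trichotomy i j with hc | hc | hc
    · -- f (a i) = a j with i < j : a j avoided f '' chosen j ∋ f (a i)
      have h1 : a i ∈ (chosen j : Set ℕ) := hmem i j hc
      have h2 : f (a i) ∈ f '' (chosen j : Set ℕ) := ⟨a i, h1, rfl⟩
      rw [← hj] at h2
      exact (hspec j).2.1 h2
    · subst hc
      exact hf (a i) hj.symm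
    · -- j < i : f (a i) = a j ∈ chosen i, but f (a i) ∉ chosen i
      have h1 : a j ∈ (chosen i : Set ℕ) := hmem j i hc
      rw [hj] at h1
      exact (hspec i).2.2.1 h1
  
/-- Helper: from a pairwise disjoint countable sequence of "reservoirs" with nonempty
complements, produce a fixed-point-free function catching every set meeting all
reservoirs. -/
lemma exists_killer (E : ℕ → Set ℕ)
    (hdisj : ∀ m n, m ≠ n → ∀ x, x ∈ E m → x ∉ E n)
    (hne : ∀ n, ∃ y, y ∉ E n) :
    ∃ f : ℕ → ℕ, (∀ n, f n ≠ n) ∧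
      ∀ A : Set ℕ, (∀ n, (A ∩ E n).Nonempty) → (f '' A ∩ A).Nonempty := by
  classical
  set τ : ℕ → ℕ := fun x => if x ∈ E (2 * x + 1) then 2 * x + 2 else 2 * x + 1 with hτdef
  have hτ_spec : ∀ x, x ∉ E (τ x) ∧ (τ x = 2 * x + 1 ∨ τ x = 2 * x + 2) := by
    intro x
    by_cases h : x ∈ E (2 * x + 1)
    · have ht : τ x = 2 * x + 2 := by simp [hτdef, h]
      refine ⟨?_, Or.inr ht⟩
      rw [ht]
      exact hdisj (2 * x + 1) (2 * x + 2) (by omega) x h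
    · have ht : τ x = 2 * x + 1 := by simp [hτdef, h]
      rw [ht]
      exact ⟨h, Or.inl rfl⟩
  have hτ_inj : Function.Injective τ := by
    intro p q hpq
    rcases (hτ_spec p).2 with h1 | h1 <;> rcases (hτ_spec q).2 with h2 | h2 <;>
      rw [h1, h2] at hpq <;> omega
  set σ : ℕ → ℕ := fun t => if h : ∃ x, τ x = t then h.choose else (hne t).choose with hσdef
  have hσ_notmem : ∀ t, σ t ∉ E t := by
    intro t
    by_cases h : ∃ x, τ x = t
    · have hs : σ t = h.choose := by simp [hσdef, h]
      rw [hs]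
      have h2 := (hτ_spec h.choose).1
      rwa [h.choose_spec] at h2
    · have hs : σ t = (hne t).choose := by simp [hσdef, h]
      rw [hs]
      exact (hne t).choose_spec
  have hστ : ∀ x, σ (τ x) = x := by
    intro x
    have h : ∃ y, τ y = τ x := ⟨x, rfl⟩
    have hs : σ (τ x) = h.choose := by simp [hσdef, h]
    rw [hs]
    exact hτ_inj h.choose_spec
  refine ⟨fun y => if h : ∃ n, y ∈ E n then σ h.choose else y + 1, ?_, ?_⟩
  · intro y
    show (if h : ∃ n, y ∈ E n then σ h.choose else y + 1) ≠ y
    by_cases h : ∃ n, y ∈ E n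
    · rw [dif_pos h]
      intro heq
      have h1 := h.choose_spec
      have h2 := hσ_notmem h.choose
      rw [heq] at h2
      exact h2 h1
    · rw [dif_neg h]
      omega
  · intro A hA
    obtain ⟨x₀, hx₀A, _⟩ := hA 0
    obtain ⟨y, hyA, hyE⟩ := hA (τ x₀)
    have hex : ∃ n, y ∈ E n := ⟨τ x₀, hyE⟩
    have hchoose : hex.choose = τ x₀ := by
      by_contra hneq
      exact hdisj _ _ hneq y hex.choose_spec hyE
    have hfy : (if h : ∃ n, y ∈ E n then σ h.choose else y + 1) = x₀ := by
      rw [dif_pos hex, hchoose, hστ]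
    exact ⟨x₀, ⟨y, hyA, hfy⟩, hx₀A⟩

/-- Every binary Rosenthal family has cardinality at least the reaping number. -/
lemma reaping_le_of_rosenthal (F : Set (Set ℕ)) (hF : IsBinaryRosenthalFamily F) :
    reapingNumber ≤ Cardinal.mk F := by
  classical
  by_contra hcon
  push_neg at hcon
  obtain ⟨A₀, hA₀⟩ : F.Nonempty := by
    obtain ⟨A, hA, -⟩ := hF.2 (fun n => n + 1) (fun n => Nat.succ_ne_self n)
    exact ⟨A, hA⟩
  -- every image family of size ≤ |F| is splittable
  have split : ∀ D : Set ℕ, (∀ A ∈ F, (A ∩ D).Infinite) →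
      ∃ X : Set ℕ, ∀ A ∈ F, ((A ∩ D) ∩ X).Infinite ∧ ((A ∩ D) \ X).Infinite := by
    intro D hD
    by_cases hex : ∃ X : Set ℕ, ∀ B ∈ (fun A => A ∩ D) '' F, (B ∩ X).Infinite ∧ (B \ X).Infinite
    · obtain ⟨X, hX⟩ := hex
      exact ⟨X, fun A hA => hX (A ∩ D) ⟨A, hA, rfl⟩⟩
    · exfalso
      have hmem : Cardinal.mk ((fun A => A ∩ D) '' F) ∈
          {c | ∃ G : Set (Set ℕ), (∀ A ∈ G, A.Infinite) ∧
            (¬ ∃ X : Set ℕ, ∀ A ∈ G, (A ∩ X).Infinite ∧ (A \ X).Infinite) ∧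
            Cardinal.mk G = c} := by
        refine ⟨(fun A => A ∩ D) '' F, ?_, hex, rfl⟩
        rintro B ⟨A, hA, rfl⟩
        exact hD A hA
      have h1 : reapingNumber ≤ Cardinal.mk ((fun A => A ∩ D) '' F) := csInf_le' hmem
      exact absurd (h1.trans Cardinal.mk_image_le) (not_le.mpr hcon)
  have h0 : ∀ A ∈ F, (A ∩ (Set.univ : Set ℕ)).Infinite := fun A hA => by
    simpa [Set.inter_univ] using hF.1 A hA
  choose Xf hXf using split
  let chain : ℕ → {D : Set ℕ // ∀ A ∈ F, (A ∩ D).Infinite} :=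
    natIter (fun p => ⟨p.1 ∩ Xf p.1 p.2, fun A hA => by
        have h := (hXf p.1 p.2 A hA).1
        rwa [Set.inter_assoc] at h⟩) ⟨Set.univ, h0⟩
  let E : ℕ → Set ℕ := fun n => (chain n).1 \ Xf (chain n).1 (chain n).2
  have hE : ∀ n, ∀ A ∈ F, (A ∩ E n).Infinite := by
    intro n A hA
    have h := (hXf (chain n).1 (chain n).2 A hA).2
    rwa [Set.inter_diff_assoc] at h
  have hstep : ∀ n, (chain (n + 1)).1 = (chain n).1 ∩ Xf (chain n).1 (chain n).2 :=
    fun n => rfl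
  have hmono : ∀ m n, m ≤ n → (chain n).1 ⊆ (chain m).1 := by
    have hm : Antitone (fun n => (chain n).1) :=
      antitone_nat_of_succ_le (fun n => by rw [hstep n]; exact Set.inter_subset_left)
    exact fun m n h => hm h
  have hdisj : ∀ p q, p ≠ q → ∀ x, x ∈ E p → x ∉ E q := by
    have key : ∀ p q, p < q → ∀ x, x ∈ E p → x ∉ E q := by
      intro p q hpq x hxp hxq
      have h1 : x ∈ (chain q).1 := hxq.1
      have h2 : x ∈ (chain (p + 1)).1 := hmono (p + 1) q hpq h1
      rw [hstep p] at h2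
      exact hxp.2 h2.2
    intro p q hpq x hxp hxq
    rcases lt_or_gt_of_ne hpq with h | h
    · exact key p q h x hxp hxq
    · exact key q p h x hxq hxp
  have hcomp : ∀ n, ∃ y, y ∉ E n := by
    intro n
    obtain ⟨y, -, hy⟩ := (hE (n + 1) A₀ hA₀).nonempty
    exact ⟨y, hdisj (n + 1) n (by omega) y hy⟩
  obtain ⟨f, hfpf, hkill⟩ := exists_killer E hdisj hcomp
  obtain ⟨A, hA, hfree⟩ := hF.2 f hfpf
  have hnonempty : (f '' A ∩ A).Nonempty := hkill A (fun n => (hE n A hA).nonempty)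
  rw [hfree] at hnonempty
  exact Set.not_nonempty_empty hnonempty


/-- The reaping number `𝔯` is at most the binary Rosenthal number `ros_01`. -/
theorem reaping_le_binaryRosenthal : reapingNumber ≤ binaryRosenthalNumber := by
  refine le_csInf ?_ ?_
  · refine ⟨Cardinal.mk {A : Set ℕ | A.Infinite}, {A : Set ℕ | A.Infinite}, ⟨fun A hA => hA, ?_⟩, rfl⟩
    intro f hf
    obtain ⟨A, h1, h2⟩ := exists_free_set f hf
    exact ⟨A, h1, h2⟩
  · rintro c ⟨F, hF, rfl⟩
    exact reaping_le_of_rosenthal F hF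
end

section
/- The c₀-Rosenthal number ros(c₀) is less than or equal to the dominating number 𝔡. -/
open Set Filter ZeroAtInftyContinuousMap
open scoped ZeroAtInfty

/-- Restriction of a `c₀` sequence to a set `A ⊆ ℕ` (the sequence `1_A · f`). -/
noncomputable def c0Restrict (A : Set ℕ) (f : C₀(ℕ, ℝ)) : C₀(ℕ, ℝ) where
  toFun := A.indicator ⇑f
  continuous_toFun := continuous_of_discreteTopology
  zero_at_infty' := by
    have h : Tendsto (fun n : ℕ => ‖f n‖) (cocompact ℕ) (nhds 0) := by
      simpa using (zero_at_infty f).norm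
    exact squeeze_zero_norm (fun n => norm_indicator_le_norm_self (⇑f) n) h

theorem c0Restrict_norm_le (A : Set ℕ) (f : C₀(ℕ, ℝ)) : ‖c0Restrict A f‖ ≤ ‖f‖ := by
  rw [← norm_toBCF_eq_norm, ← norm_toBCF_eq_norm]
  refine BoundedContinuousFunction.norm_le_of_nonempty.mpr fun n => ?_
  calc ‖(c0Restrict A f).toBCF n‖ = ‖A.indicator (⇑f) n‖ := rfl
    _ ≤ ‖f n‖ := norm_indicator_le_norm_self (⇑f) n
    _ ≤ ‖f.toBCF‖ := BoundedContinuousFunction.norm_coe_le_norm f.toBCF n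

/-- Multiplication by the characteristic function of `A ⊆ ℕ`, as a bounded linear operator
on `c₀`. -/
noncomputable def c0Proj (A : Set ℕ) : C₀(ℕ, ℝ) →L[ℝ] C₀(ℕ, ℝ) :=
  LinearMap.mkContinuous
    { toFun := c0Restrict A
      map_add' := fun f g => by
        ext n
        show A.indicator (⇑(f + g)) n = A.indicator (⇑f) n + A.indicator (⇑g) n
        by_cases hn : n ∈ A <;> simp [Set.indicator_apply, hn]
      map_smul' := fun c f => by
        ext n
        show A.indicator (⇑(c • f)) n = c • A.indicator (⇑f) n
        by_cases hn : n ∈ A <;> simp [Set.indicator_apply, hn] }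
    1
    (fun f => by simpa using c0Restrict_norm_le A f)

/-- The characteristic function of `{n}` as an element of `c₀`. -/
noncomputable def c0Single (n : ℕ) : C₀(ℕ, ℝ) where
  toFun := ({n} : Set ℕ).indicator 1
  continuous_toFun := continuous_of_discreteTopology
  zero_at_infty' := by
    have hmem : ({n}ᶜ : Set ℕ) ∈ cocompact ℕ := by
      rw [Filter.mem_cocompact]
      exact ⟨{n}, isCompact_singleton, le_refl _⟩
    have h : ∀ᶠ m in cocompact ℕ, ({n} : Set ℕ).indicator (1 : ℕ → ℝ) m = 0 := by
      filter_upwards [hmem] with m hm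
      exact Set.indicator_of_notMem hm 1
    exact Filter.Tendsto.congr' (h.mono fun m hm => hm.symm) tendsto_const_nhds



lemma c0Proj_apply (A : Set ℕ) (f : C₀(ℕ,ℝ)) (n : ℕ) :
    c0Proj A f n = A.indicator ⇑f n := rfl

lemma c0_abs_le_norm (f : C₀(ℕ,ℝ)) (n : ℕ) : |f n| ≤ ‖f‖ := by
  rw [← norm_toBCF_eq_norm]
  exact BoundedContinuousFunction.norm_coe_le_norm f.toBCF n

lemma c0_norm_le {f : C₀(ℕ,ℝ)} {C : ℝ} (h : ∀ n, |f n| ≤ C) : ‖f‖ ≤ C := by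
  rw [← norm_toBCF_eq_norm]
  exact BoundedContinuousFunction.norm_le_of_nonempty.mpr h

lemma c0Single_apply (j n : ℕ) : c0Single j n = if n = j then 1 else 0 := by
  show ({j} : Set ℕ).indicator 1 n = _
  by_cases h : n = j <;> simp [Set.indicator_apply, h]

lemma c0_sum_apply {ι : Type*} (s : Finset ι) (f : ι → C₀(ℕ,ℝ)) (n : ℕ) :
    (∑ i ∈ s, f i) n = ∑ i ∈ s, f i n := by
  classical
  induction s using Finset.cons_induction with
  | empty => simp
  | cons a s ha ih => rw [Finset.sum_cons, Finset.sum_cons, ← ih]; simp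

lemma finsum_repr (s : Finset ℕ) (c : ℕ → ℝ) (n : ℕ) :
    (∑ j ∈ s, c j • c0Single j : C₀(ℕ,ℝ)) n = if n ∈ s then c n else 0 := by
  classical
  rw [c0_sum_apply]
  have : ∀ j ∈ s, (c j • c0Single j : C₀(ℕ,ℝ)) n = if j = n then c j else 0 := by
    intro j _
    by_cases h : j = n
    · subst h; simp [c0Single_apply]
    · simp [c0Single_apply, h, Ne.symm h]
  rw [Finset.sum_congr rfl this, Finset.sum_ite_eq' s n c]

noncomputable def ent (T : C₀(ℕ,ℝ) →L[ℝ] C₀(ℕ,ℝ)) (m n : ℕ) : ℝ := T (c0Single n) m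

lemma eval_tendsto {u : ℕ → C₀(ℕ,ℝ)} {L : C₀(ℕ,ℝ)} (h : Tendsto u atTop (nhds L)) (m : ℕ) :
    Tendsto (fun N => u N m) atTop (nhds (L m)) := by
  have hc : Continuous fun f : C₀(ℕ,ℝ) => f m := by
    refine (LipschitzWith.of_dist_le_mul (K := 1) fun f g => ?_).continuous
    rw [dist_eq_norm, dist_eq_norm, Real.norm_eq_abs, NNReal.coe_one, one_mul]
    have : f m - g m = (f - g) m := by simp
    rw [this]
    exact c0_abs_le_norm (f - g) m
  exact (hc.tendsto L).comp h

lemma proj_tendsto (A : Set ℕ) (x : C₀(ℕ,ℝ)) :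
    Tendsto (fun N : ℕ => c0Proj (A ∩ {n | n < N}) x) atTop (nhds (c0Proj A x)) := by
  rw [NormedAddCommGroup.tendsto_atTop]
  intro ε hε
  have hx : Tendsto (fun n => x n) atTop (nhds 0) := by
    have := zero_at_infty x
    rwa [cocompact_eq_atTop] at this
  obtain ⟨N₀, hN₀⟩ := (Metric.tendsto_atTop.mp hx) (ε/2) (half_pos hε)
  refine ⟨N₀, fun N hN => ?_⟩
  have hb : ∀ n, |(c0Proj (A ∩ {n | n < N}) x - c0Proj A x) n| ≤ ε/2 := by
    intro n
    have hval : (c0Proj (A ∩ {n | n < N}) x - c0Proj A x) n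
        = (A ∩ {n | n < N}).indicator (⇑x) n - A.indicator (⇑x) n := by
      simp [c0Proj_apply]
    rw [hval]
    by_cases hnA : n ∈ A
    · by_cases hnN : n < N
      · rw [Set.indicator_of_mem (show n ∈ A ∩ {n | n < N} from ⟨hnA, hnN⟩), Set.indicator_of_mem hnA]
        simp [le_of_lt (half_pos hε)]
      · rw [Set.indicator_of_notMem (fun hmem => hnN hmem.2), Set.indicator_of_mem hnA]
        have hn : N₀ ≤ n := le_trans hN (not_lt.mp hnN)
        have := hN₀ n hn
        rw [dist_zero_right, Real.norm_eq_abs] at this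
        rw [zero_sub, abs_neg]
        exact le_of_lt this
    · rw [Set.indicator_of_notMem (fun hmem => hnA hmem.1), Set.indicator_of_notMem hnA]
      simp [le_of_lt (half_pos hε)]
  calc ‖c0Proj (A ∩ {n | n < N}) x - c0Proj A x‖ ≤ ε/2 := c0_norm_le hb
    _ < ε := half_lt_self hε

lemma opnorm_bound (T : C₀(ℕ,ℝ) →L[ℝ] C₀(ℕ,ℝ)) {δ : ℝ} (hδ : 0 ≤ δ) (A : Set ℕ)
    (hk : ∀ m ∈ A, ∀ s : Finset ℕ, ↑s ⊆ A → ∑ n ∈ s, |ent T m n| ≤ δ) :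
    ‖(c0Proj A).comp (T.comp (c0Proj A))‖ ≤ δ := by
  classical
  refine ContinuousLinearMap.opNorm_le_bound _ hδ fun x => ?_
  rw [ContinuousLinearMap.comp_apply, ContinuousLinearMap.comp_apply]
  refine c0_norm_le fun m => ?_
  rw [c0Proj_apply]
  by_cases hm : m ∈ A
  · rw [Set.indicator_of_mem hm]
    -- key: |T (c0Proj A x) m| ≤ δ * ‖x‖
    have hmain : ∀ N : ℕ, |T (c0Proj (A ∩ {n | n < N}) x) m| ≤ δ * ‖x‖ := by
      intro N
      set s : Finset ℕ := (Finset.range N).filter (· ∈ A) with hsdef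
      have hrepr : c0Proj (A ∩ {n | n < N}) x = ∑ j ∈ s, x j • c0Single j := by
        ext n
        rw [finsum_repr, c0Proj_apply]
        by_cases hn : n ∈ A ∩ {n | n < N}
        · rw [Set.indicator_of_mem hn, if_pos]
          simp only [hsdef, Finset.mem_filter, Finset.mem_range]
          exact ⟨hn.2, hn.1⟩
        · rw [Set.indicator_of_notMem hn, if_neg]
          intro hns
          simp only [hsdef, Finset.mem_filter, Finset.mem_range] at hns
          exact hn ⟨hns.2, hns.1⟩
      rw [hrepr, map_sum]
      have happ : (∑ j ∈ s, T (x j • c0Single j)) m = ∑ j ∈ s, x j * ent T m j := by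
        rw [c0_sum_apply]
        refine Finset.sum_congr rfl fun j _ => ?_
        rw [map_smul]
        rfl
      rw [happ]
      have hsub : ↑s ⊆ A := by
        intro n hn
        simp only [hsdef, Finset.coe_filter, Finset.mem_range, Set.mem_setOf_eq] at hn
        exact hn.2
      calc |∑ j ∈ s, x j * ent T m j| ≤ ∑ j ∈ s, |x j * ent T m j| :=
            Finset.abs_sum_le_sum_abs _ _
        _ = ∑ j ∈ s, |x j| * |ent T m j| := by
            refine Finset.sum_congr rfl fun j _ => abs_mul _ _
        _ ≤ ∑ j ∈ s, ‖x‖ * |ent T m j| := by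
            refine Finset.sum_le_sum fun j _ => ?_
            exact mul_le_mul_of_nonneg_right (c0_abs_le_norm x j) (abs_nonneg _)
        _ = ‖x‖ * ∑ j ∈ s, |ent T m j| := by rw [Finset.mul_sum]
        _ ≤ ‖x‖ * δ := mul_le_mul_of_nonneg_left (hk m hm s hsub) (norm_nonneg x)
        _ = δ * ‖x‖ := mul_comm _ _
    have hT : Tendsto (fun N : ℕ => T (c0Proj (A ∩ {n | n < N}) x) m) atTop
        (nhds (T (c0Proj A x) m)) :=
      eval_tendsto ((T.continuous.tendsto _).comp (proj_tendsto A x)) m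
    have habs : Tendsto (fun N : ℕ => |T (c0Proj (A ∩ {n | n < N}) x) m|) atTop
        (nhds (|T (c0Proj A x) m|)) := hT.abs
    exact le_of_tendsto habs (Filter.Eventually.of_forall hmain)
  · rw [Set.indicator_of_notMem hm]
    simp only [abs_zero]
    positivity

lemma norm_finsign_le (s : Finset ℕ) (c : ℕ → ℝ) :
    ‖(∑ j ∈ s, Real.sign (c j) • c0Single j : C₀(ℕ,ℝ))‖ ≤ 1 := by
  refine c0_norm_le fun n => ?_
  rw [finsum_repr]
  by_cases h : n ∈ s
  · rw [if_pos h]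
    rcases lt_trichotomy (c n) 0 with hc|hc|hc
    · simp [Real.sign_of_neg hc]
    · simp [hc]
    · simp [Real.sign_of_pos hc]
  · simp [h]

lemma row_sum_le (T : C₀(ℕ,ℝ) →L[ℝ] C₀(ℕ,ℝ)) (m : ℕ) (s : Finset ℕ) :
    ∑ n ∈ s, |ent T m n| ≤ ‖T‖ := by
  set x : C₀(ℕ,ℝ) := ∑ j ∈ s, Real.sign (ent T m j) • c0Single j with hx
  have hTx : T x m = ∑ n ∈ s, |ent T m n| := by
    rw [hx, map_sum, c0_sum_apply]
    refine Finset.sum_congr rfl fun j _ => ?_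
    rw [map_smul]
    show Real.sign (ent T m j) • (T (c0Single j)) m = _
    rw [smul_eq_mul]
    have he : (T (c0Single j)) m = ent T m j := rfl
    rw [he]
    rcases lt_trichotomy (ent T m j) 0 with hc|hc|hc
    · rw [Real.sign_of_neg hc, abs_of_neg hc]; ring
    · rw [hc]; simp
    · rw [Real.sign_of_pos hc, abs_of_pos hc]; ring
  calc ∑ n ∈ s, |ent T m n| = T x m := hTx.symm
    _ ≤ |T x m| := le_abs_self _
    _ ≤ ‖T x‖ := c0_abs_le_norm _ m
    _ ≤ ‖T‖ * ‖x‖ := T.le_opNorm x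
    _ ≤ ‖T‖ * 1 := mul_le_mul_of_nonneg_left (norm_finsign_le s _) (norm_nonneg T)
    _ = ‖T‖ := mul_one _

lemma row_summable (T : C₀(ℕ,ℝ) →L[ℝ] C₀(ℕ,ℝ)) (m : ℕ) :
    Summable fun n => |ent T m n| :=
  summable_of_sum_le (fun n => abs_nonneg _) (row_sum_le T m)

lemma row_tail (T : C₀(ℕ,ℝ) →L[ℝ] C₀(ℕ,ℝ)) (m : ℕ) {δ : ℝ} (hδ : 0 < δ) :
    ∃ N : ℕ, ∀ s : Finset ℕ, (∀ n ∈ s, N ≤ n) → ∑ n ∈ s, |ent T m n| ≤ δ := by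
  obtain ⟨s₀, hs₀⟩ := (row_summable T m).vanishing (Metric.ball_mem_nhds (0:ℝ) hδ)
  refine ⟨(s₀.sup id) + 1, fun s hs => ?_⟩
  have hdisj : Disjoint s s₀ := by
    rw [Finset.disjoint_left]
    intro n hn hn0
    have h1 := hs n hn
    have h2 : n ≤ s₀.sup id := Finset.le_sup (f := id) hn0
    omega
  have := hs₀ s hdisj
  rw [Metric.mem_ball, dist_zero_right, Real.norm_eq_abs] at this
  exact le_of_lt (lt_of_le_of_lt (le_abs_self _) this)

lemma col_small (T : C₀(ℕ,ℝ) →L[ℝ] C₀(ℕ,ℝ)) (n : ℕ) {δ : ℝ} (hδ : 0 < δ) :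
    ∃ N : ℕ, ∀ m, N ≤ m → |ent T m n| ≤ δ := by
  have h : Tendsto (fun m => ent T m n) atTop (nhds 0) := by
    have := zero_at_infty (T (c0Single n))
    rwa [cocompact_eq_atTop] at this
  obtain ⟨N, hN⟩ := (Metric.tendsto_atTop.mp h) δ hδ
  refine ⟨N, fun m hm => ?_⟩
  have := hN m hm
  rw [dist_zero_right, Real.norm_eq_abs] at this
  exact le_of_lt this

lemma exists_f (T : C₀(ℕ,ℝ) →L[ℝ] C₀(ℕ,ℝ)) {δ : ℝ} (hδ : 0 < δ) :
    ∃ f : ℕ → ℕ,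
      (∀ m, ∀ s : Finset ℕ, (∀ n ∈ s, f m ≤ n) → ∑ n ∈ s, |ent T m n| ≤ δ/2) ∧
      (∀ n m, f n ≤ m → |ent T m n| ≤ δ * (1/2)^(n+3)) := by
  have h1 : ∀ j : ℕ, ∃ N : ℕ, ∀ s : Finset ℕ, (∀ n ∈ s, N ≤ n) → ∑ n ∈ s, |ent T j n| ≤ δ/2 :=
    fun j => row_tail T j (half_pos hδ)
  have h2 : ∀ j : ℕ, ∃ N : ℕ, ∀ m, N ≤ m → |ent T m j| ≤ δ * (1/2)^(j+3) := by
    intro j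
    exact col_small T j (by positivity)
  choose N1 hN1 using h1
  choose N2 hN2 using h2
  refine ⟨fun j => max (N1 j) (N2 j), fun m s hs => ?_, fun n m hm => ?_⟩
  · exact hN1 m s fun n hn => le_trans (le_max_left _ _) (hs n hn)
  · exact hN2 n m (le_trans (le_max_right _ _) hm)

lemma geom_summable : Summable (fun n : ℕ => ((1:ℝ)/2)^(n+3)) := by
  have h2 := (summable_geometric_of_lt_one (by norm_num) (by norm_num : (1:ℝ)/2 < 1)).mul_right ((1:ℝ)/8)
  refine h2.congr fun n => by ring

lemma geom_tsum : ∑' n : ℕ, ((1:ℝ)/2)^(n+3) = 1/4 := by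
  have h : ∀ n : ℕ, ((1:ℝ)/2)^(n+3) = ((1:ℝ)/2)^n * (1/8) := by intro n; ring
  rw [tsum_congr h, tsum_mul_right, tsum_geometric_of_lt_one (by norm_num) (by norm_num)]
  norm_num

def orbit (h : ℕ → ℕ) (k : ℕ) : ℕ := h^[k] 0

def Aset (h : ℕ → ℕ) : Set ℕ := Set.range (orbit h)

lemma orbit_succ (h : ℕ → ℕ) (k : ℕ) : orbit h (k+1) = h (orbit h k) :=
  Function.iterate_succ_apply' h k 0

lemma Aset_strictMono {h : ℕ → ℕ} (hh : ∀ k, k < h k) : StrictMono (orbit h) :=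
  strictMono_nat_of_lt_succ fun k => by
    rw [orbit_succ]; exact hh _

lemma Aset_infinite {h : ℕ → ℕ} (hh : ∀ k, k < h k) : (Aset h).Infinite :=
  Set.infinite_range_of_injective (Aset_strictMono hh).injective

lemma key_sum (T : C₀(ℕ,ℝ) →L[ℝ] C₀(ℕ,ℝ)) (hdiag : ∀ n : ℕ, T (c0Single n) n = 0)
    {δ : ℝ} (f : ℕ → ℕ)
    (hf1 : ∀ m, ∀ s : Finset ℕ, (∀ n ∈ s, f m ≤ n) → ∑ n ∈ s, |ent T m n| ≤ δ/2)
    (hf2 : ∀ n m, f n ≤ m → |ent T m n| ≤ δ * (1/2)^(n+3))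
    (hδ : 0 ≤ δ)
    (h : ℕ → ℕ) (hh1 : ∀ k, k < h k) (hh2 : ∀ k, f k ≤ h k) :
    ∀ m ∈ Aset h, ∀ s : Finset ℕ, ↑s ⊆ Aset h → ∑ n ∈ s, |ent T m n| ≤ δ := by
  classical
  intro m hm s hs
  have hmono := Aset_strictMono hh1
  obtain ⟨k, hk⟩ := hm
  rw [← Finset.sum_filter_add_sum_filter_not s (· < m)]
  have hlow : ∑ n ∈ s.filter (· < m), |ent T m n| ≤ δ/2 := by
    have hb : ∀ n ∈ s.filter (· < m), |ent T m n| ≤ δ * (1/2)^(n+3) := by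
      intro n hn
      rw [Finset.mem_filter] at hn
      obtain ⟨hns, hnm⟩ := hn
      obtain ⟨i, hi⟩ := hs hns
      have hik : i < k := by
        refine (hmono.lt_iff_lt).mp ?_
        rw [hi, hk]; exact hnm
      have h2 : h n ≤ m := by
        rw [← hk, ← hi, ← orbit_succ h]
        exact hmono.monotone (by omega)
      exact hf2 n m (le_trans (hh2 n) h2)
    calc ∑ n ∈ s.filter (· < m), |ent T m n|
        ≤ ∑ n ∈ s.filter (· < m), δ * (1/2)^(n+3) := Finset.sum_le_sum hb
      _ = δ * ∑ n ∈ s.filter (· < m), ((1:ℝ)/2)^(n+3) := by rw [Finset.mul_sum]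
      _ ≤ δ * ∑' n : ℕ, ((1:ℝ)/2)^(n+3) := by
          refine mul_le_mul_of_nonneg_left ?_ hδ
          exact Summable.sum_le_tsum _ (fun n _ => by positivity) geom_summable
      _ = δ * (1/4) := by rw [geom_tsum]
      _ ≤ δ/2 := by linarith
  have hhigh : ∑ n ∈ s.filter (fun n => ¬ n < m), |ent T m n| ≤ δ/2 := by
    have hz : |ent T m m| = 0 := by
      simp [ent, hdiag m]
    have herase : ∑ n ∈ s.filter (fun n => ¬ n < m), |ent T m n|
        = ∑ n ∈ (s.filter (fun n => ¬ n < m)).erase m, |ent T m n| :=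
      (Finset.sum_erase (f := fun n => |ent T m n|) _ hz).symm
    rw [herase]
    refine hf1 m _ fun n hn => ?_
    rw [Finset.mem_erase, Finset.mem_filter] at hn
    obtain ⟨hne, hns, hnm⟩ := hn
    have hgt : m < n := by omega
    obtain ⟨i, hi⟩ := hs hns
    have hik : k < i := by
      refine (hmono.lt_iff_lt).mp ?_
      rw [hi, hk]; exact hgt
    have h2 : h m ≤ n := by
      rw [← hk, ← hi, ← orbit_succ h]
      exact hmono.monotone (by omega)
    exact le_trans (hh2 m) h2
  linarith

/-- The modified dominating functions. -/
def Phi (p : (ℕ → ℕ) × ℕ) : ℕ → ℕ := fun k => max (max p.2 (k+1)) (p.1 k)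

lemma Phi_gt (p : (ℕ → ℕ) × ℕ) (k : ℕ) : k < Phi p k :=
  lt_of_lt_of_le (Nat.lt_succ_self k) (le_trans (le_max_right _ _) (le_max_left _ _))

/-- A *`c₀`-Rosenthal family*: a family of infinite subsets of `ℕ` such that for every
bounded linear operator `T` on `c₀` with zero diagonal and every `ε > 0` there is a member
`A` of the family with `‖P_A T P_A‖ ≤ ε‖T‖`. -/
def IsC0RosenthalFamily (F : Set (Set ℕ)) : Prop :=
  (∀ A ∈ F, A.Infinite) ∧
    ∀ T : C₀(ℕ, ℝ) →L[ℝ] C₀(ℕ, ℝ), (∀ n : ℕ, T (c0Single n) n = 0) →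
      ∀ ε : ℝ, 0 < ε → ∃ A ∈ F, ‖(c0Proj A).comp (T.comp (c0Proj A))‖ ≤ ε * ‖T‖

/-- The `c₀`-Rosenthal number `ros(c₀)`: the minimal cardinality of a `c₀`-Rosenthal
family. -/
noncomputable def c0RosenthalNumber : Cardinal :=
  sInf {c | ∃ F : Set (Set ℕ), IsC0RosenthalFamily F ∧ Cardinal.mk F = c}

/-- The dominating number `𝔡`: the minimal cardinality of a family `D ⊆ ℕ^ℕ` such that
every `f : ℕ → ℕ` is eventually dominated by a member of `D`. -/
noncomputable def dominatingNumber : Cardinal :=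
  sInf {c | ∃ D : Set (ℕ → ℕ),
    (∀ f : ℕ → ℕ, ∃ g ∈ D, ∀ᶠ k in Filter.atTop, f k ≤ g k) ∧ Cardinal.mk D = c}

lemma rosenthal_family_aux {D : Set (ℕ → ℕ)}
    (hdom : ∀ f : ℕ → ℕ, ∃ g ∈ D, ∀ᶠ k in Filter.atTop, f k ≤ g k) :
    IsC0RosenthalFamily ((fun p => Aset (Phi p)) '' (D ×ˢ (Set.univ : Set ℕ))) := by
  constructor
  · rintro A ⟨p, _, rfl⟩
    exact Aset_infinite (Phi_gt p)
  · intro T hdiag ε hε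
    by_cases hT : ‖T‖ = 0
    · have hT0 : T = 0 := by
        ext x n
        have h1 : ‖T x‖ ≤ 0 := by
          calc ‖T x‖ ≤ ‖T‖ * ‖x‖ := T.le_opNorm x
            _ = 0 := by rw [hT, zero_mul]
        have h2 : T x = 0 := norm_le_zero_iff.mp h1
        simp [h2]
      obtain ⟨g, hg, -⟩ := hdom 0
      refine ⟨Aset (Phi (g, 0)), ⟨(g, 0), ⟨hg, Set.mem_univ _⟩, rfl⟩, ?_⟩
      have hz : (c0Proj (Aset (Phi (g, 0)))).comp (T.comp (c0Proj (Aset (Phi (g, 0))))) = 0 := by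
        rw [hT0, ContinuousLinearMap.zero_comp, ContinuousLinearMap.comp_zero]
      rw [hz, hT0, ContinuousLinearMap.opNorm_zero]; simp
    · have hTpos : 0 < ‖T‖ := lt_of_le_of_ne (norm_nonneg T) (Ne.symm hT)
      have hδ : 0 < ε * ‖T‖ := mul_pos hε hTpos
      obtain ⟨f, hf1, hf2⟩ := exists_f T hδ
      obtain ⟨g, hg, hev⟩ := hdom f
      obtain ⟨K, hK⟩ := Filter.eventually_atTop.mp hev
      set m₀ := (Finset.range K).sup f with hm₀
      set h := Phi (g, m₀) with hh
      have hh2 : ∀ k, f k ≤ h k := by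
        intro k
        by_cases hk : k < K
        · have : f k ≤ m₀ := Finset.le_sup (Finset.mem_range.mpr hk)
          exact le_trans this (le_trans (le_max_left _ _) (le_max_left _ _))
        · exact le_trans (hK k (not_lt.mp hk)) (le_max_right _ _)
      refine ⟨Aset h, ⟨(g, m₀), ⟨hg, Set.mem_univ _⟩, rfl⟩, ?_⟩
      exact opnorm_bound T (le_of_lt hδ) _
        (key_sum T hdiag f hf1 hf2 (le_of_lt hδ) h (Phi_gt _) hh2)

lemma dominating_infinite {D : Set (ℕ → ℕ)}
    (hdom : ∀ f : ℕ → ℕ, ∃ g ∈ D, ∀ᶠ k in Filter.atTop, f k ≤ g k) : D.Infinite := by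
  by_contra hfin
  rw [Set.not_infinite] at hfin
  obtain ⟨g, hg, hev⟩ := hdom (fun k => (hfin.toFinset.sup fun g => g k) + 1)
  obtain ⟨k, hk⟩ := hev.exists
  have h1 : g k ≤ hfin.toFinset.sup fun g => g k :=
    Finset.le_sup (f := fun g => g k) (hfin.mem_toFinset.mpr hg)
  have h2 : (hfin.toFinset.sup fun g => g k) + 1 ≤ g k := hk
  exact Nat.not_succ_le_self _ (le_trans h2 h1)

/-- The `c₀`-Rosenthal number `ros(c₀)` is at most the dominating number `𝔡`. -/
theorem c0Rosenthal_le_dominating : c0RosenthalNumber ≤ dominatingNumber := by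
  have hne : {c | ∃ D : Set (ℕ → ℕ),
      (∀ f : ℕ → ℕ, ∃ g ∈ D, ∀ᶠ k in Filter.atTop, f k ≤ g k) ∧ Cardinal.mk D = c}.Nonempty :=
    ⟨_, Set.univ, fun f => ⟨f, Set.mem_univ f, Filter.Eventually.of_forall fun k => le_refl _⟩, rfl⟩
  obtain ⟨D, hdom, hcard⟩ :
      ∃ D : Set (ℕ → ℕ),
        (∀ f : ℕ → ℕ, ∃ g ∈ D, ∀ᶠ k in Filter.atTop, f k ≤ g k) ∧
          Cardinal.mk D = dominatingNumber := csInf_mem hne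
  have hDinf : D.Infinite := dominating_infinite hdom
  have hℵ : Cardinal.aleph0 ≤ Cardinal.mk D := by
    rw [Cardinal.aleph0_le_mk_iff]
    exact Set.infinite_coe_iff.mpr hDinf
  set F : Set (Set ℕ) := (fun p => Aset (Phi p)) '' (D ×ˢ (Set.univ : Set ℕ)) with hF
  have hFam : IsC0RosenthalFamily F := rosenthal_family_aux hdom
  have h1 : c0RosenthalNumber ≤ Cardinal.mk F :=
    csInf_le (OrderBot.bddBelow _) ⟨F, hFam, rfl⟩
  have h2 : Cardinal.mk F ≤ Cardinal.mk ↥(D ×ˢ (Set.univ : Set ℕ)) := Cardinal.mk_image_le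
  have h3 : Cardinal.mk ↥(D ×ˢ (Set.univ : Set ℕ)) = Cardinal.mk D * Cardinal.mk ℕ := by
    rw [Cardinal.mk_congr (Equiv.Set.prod _ _), Cardinal.mk_prod, Cardinal.lift_id,
      Cardinal.lift_id, Cardinal.mk_congr (Equiv.Set.univ ℕ)]
  have h4 : Cardinal.mk D * Cardinal.mk ℕ = Cardinal.mk D := by
    rw [Cardinal.mk_nat]
    exact Cardinal.mul_eq_left hℵ hℵ Cardinal.aleph0_ne_zero
  calc c0RosenthalNumber ≤ Cardinal.mk F := h1
    _ ≤ Cardinal.mk ↥(D ×ˢ (Set.univ : Set ℕ)) := h2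
    _ = Cardinal.mk D := by rw [h3, h4]
    _ = dominatingNumber := hcard
end

section
/- The paving lemma fails for operators on ℓ∞: there exists a bounded linear operator T : ℓ∞ → ℓ∞ with ‖T‖ = 1 and T(1_{{n}}) = 0 for every n ∈ ℕ, such that for every finite partition {A_1, …, A_l} of ℕ there is 1 ≤ i ≤ l with ‖P_{A_i} T P_{A_i}‖ = 1. -/
open Set
open scoped ENNReal

theorem memℓp_infty_indicator (A : Set ℕ) (f : lp (fun _ : ℕ => ℝ) ∞) :
    Memℓp (fun n => A.indicator (⇑f) n) ∞ := by
  apply memℓp_infty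
  refine ⟨‖f‖, ?_⟩
  rintro x ⟨n, rfl⟩
  exact (norm_indicator_le_norm_self (⇑f) n).trans
    (lp.norm_apply_le_norm ENNReal.top_ne_zero f n)

/-- The element of `ℓ∞` obtained by restricting `f` to `A`. -/
noncomputable def linftyRestrict (A : Set ℕ) (f : lp (fun _ : ℕ => ℝ) ∞) :
    lp (fun _ : ℕ => ℝ) ∞ :=
  ⟨fun n => A.indicator (⇑f) n, memℓp_infty_indicator A f⟩

theorem linftyRestrict_norm_le (A : Set ℕ) (f : lp (fun _ : ℕ => ℝ) ∞) :
    ‖linftyRestrict A f‖ ≤ ‖f‖ := by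
  refine lp.norm_le_of_forall_le (norm_nonneg f) fun n => ?_
  exact (norm_indicator_le_norm_self (⇑f) n).trans
    (lp.norm_apply_le_norm ENNReal.top_ne_zero f n)

/-- Multiplication by the characteristic function of `A ⊆ ℕ`, as a bounded linear operator
on `ℓ∞`. -/
noncomputable def linftyProj (A : Set ℕ) :
    lp (fun _ : ℕ => ℝ) ∞ →L[ℝ] lp (fun _ : ℕ => ℝ) ∞ :=
  LinearMap.mkContinuous
    { toFun := linftyRestrict A
      map_add' := fun f g => by
        refine lp.ext ?_
        rw [lp.coeFn_add]
        funext n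
        show A.indicator (⇑(f + g)) n = A.indicator (⇑f) n + A.indicator (⇑g) n
        rw [lp.coeFn_add]
        by_cases hn : n ∈ A <;> simp [Set.indicator_apply, hn]
      map_smul' := fun c f => by
        refine lp.ext ?_
        rw [RingHom.id_apply, lp.coeFn_smul]
        funext n
        show A.indicator (⇑(c • f)) n = c • A.indicator (⇑f) n
        rw [lp.coeFn_smul]
        by_cases hn : n ∈ A <;> simp [Set.indicator_apply, hn] }
    1
    (fun f => by rw [one_mul]; exact linftyRestrict_norm_le A f)

open Filter
open scoped Topology
open scoped ENNReal Topology

noncomputable def myU : Ultrafilter ℕ := Ultrafilter.of Filter.cofinite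

theorem myU_le : (myU : Filter ℕ) ≤ Filter.cofinite := Ultrafilter.of_le _

noncomputable def limU (f : ℕ → ℝ) : ℝ := limUnder (myU : Filter ℕ) f

theorem tendsto_limU {f : ℕ → ℝ} {C : ℝ} (h : ∀ n, |f n| ≤ C) :
    Filter.Tendsto f (myU : Filter ℕ) (𝓝 (limU f)) := by
  apply tendsto_nhds_limUnder
  have hle : (myU.map f : Filter ℝ) ≤ Filter.principal (Set.Icc (-C) C) := by
    rw [Filter.le_principal_iff, Ultrafilter.mem_coe, Ultrafilter.mem_map]
    have : f ⁻¹' Set.Icc (-C) C = Set.univ := by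
      ext n; simp [abs_le.1 (h n)]
    rw [this]; exact Filter.univ_mem
  obtain ⟨a, -, ha⟩ := isCompact_Icc.ultrafilter_le_nhds (myU.map f) hle
  exact ⟨a, ha⟩

theorem limU_eq {f : ℕ → ℝ} {C a : ℝ} (h : ∀ n, |f n| ≤ C)
    (ha : Filter.Tendsto f (myU : Filter ℕ) (𝓝 a)) : limU f = a :=
  tendsto_nhds_unique (tendsto_limU h) ha

theorem abs_apply_le (f : lp (fun _ : ℕ => ℝ) ∞) (n : ℕ) : |f n| ≤ ‖f‖ :=
  lp.norm_apply_le_norm ENNReal.top_ne_zero f n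

theorem abs_limU_le (f : lp (fun _ : ℕ => ℝ) ∞) : |limU ⇑f| ≤ ‖f‖ := by
  have h := tendsto_limU (abs_apply_le f)
  have hmem : limU ⇑f ∈ Set.Icc (-‖f‖) ‖f‖ := by
    apply isClosed_Icc.mem_of_tendsto h
    filter_upwards with n using abs_le.1 (abs_apply_le f n)
  exact abs_le.2 hmem

theorem memℓp_const (c : ℝ) : Memℓp (fun _ : ℕ => c) ∞ :=
  memℓp_infty ⟨|c|, by rintro x ⟨n, rfl⟩; exact le_refl _⟩

/-- constant sequence as element of lp -/
noncomputable def constlp (c : ℝ) : lp (fun _ : ℕ => ℝ) ∞ := ⟨fun _ => c, memℓp_const c⟩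

theorem constlp_norm_le (c : ℝ) : ‖constlp c‖ ≤ |c| :=
  lp.norm_le_of_forall_le (abs_nonneg c) fun _ => le_refl _

noncomputable def Tlim : lp (fun _ : ℕ => ℝ) ∞ →L[ℝ] lp (fun _ : ℕ => ℝ) ∞ :=
  LinearMap.mkContinuous
    { toFun := fun f => constlp (limU ⇑f)
      map_add' := fun f g => by
        have h : limU ⇑(f + g) = limU ⇑f + limU ⇑g := by
          refine limU_eq (C := ‖f + g‖) (abs_apply_le _) ?_
          have : Filter.Tendsto (fun n => f n + g n) (myU : Filter ℕ)
              (nhds (limU ⇑f + limU ⇑g)) :=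
            (tendsto_limU (abs_apply_le f)).add (tendsto_limU (abs_apply_le g))
          refine this.congr fun n => ?_
          rw [lp.coeFn_add]; rfl
        refine lp.ext ?_
        rw [lp.coeFn_add]
        funext n
        show limU ⇑(f + g) = limU ⇑f + limU ⇑g
        exact h
      map_smul' := fun c f => by
        have h : limU ⇑(c • f) = c * limU ⇑f := by
          refine limU_eq (C := ‖c • f‖) (abs_apply_le _) ?_
          have : Filter.Tendsto (fun n => c * f n) (myU : Filter ℕ)
              (nhds (c * limU ⇑f)) := (tendsto_limU (abs_apply_le f)).const_mul c
          refine this.congr fun n => ?_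
          rw [lp.coeFn_smul]; rfl
        refine lp.ext ?_
        rw [RingHom.id_apply, lp.coeFn_smul]
        funext n
        show limU ⇑(c • f) = c • limU ⇑f
        exact h }
    1
    (fun f => by
      rw [one_mul]
      exact (constlp_norm_le _).trans (abs_limU_le f))

theorem Top_apply (f : lp (fun _ : ℕ => ℝ) ∞) : Tlim f = constlp (limU ⇑f) := rfl

theorem Top_norm_le : ‖Tlim‖ ≤ 1 :=
  LinearMap.mkContinuous_norm_le _ zero_le_one _

theorem constlp_one_norm : ‖constlp 1‖ = 1 := by
  refine le_antisymm ?_ ?_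
  · have := constlp_norm_le 1; rwa [abs_one] at this
  · have h := abs_apply_le (constlp 1) 0
    have h0 : (constlp 1 : lp (fun _ : ℕ => ℝ) ∞) 0 = 1 := rfl
    rw [h0, abs_one] at h; exact h

theorem limU_congr_of_mem {f : ℕ → ℝ} {C a : ℝ} (h : ∀ n, |f n| ≤ C)
    {A : Set ℕ} (hA : A ∈ myU) (hf : ∀ n ∈ A, f n = a) : limU f = a := by
  refine limU_eq h ?_
  refine Filter.Tendsto.congr' ?_ tendsto_const_nhds
  filter_upwards [hA] with n hn using (hf n hn).symm

theorem linftyProj_norm_le (A : Set ℕ) : ‖linftyProj A‖ ≤ 1 :=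
  LinearMap.mkContinuous_norm_le _ zero_le_one _

theorem linftyProj_apply (A : Set ℕ) (f : lp (fun _ : ℕ => ℝ) ∞) (n : ℕ) :
    (linftyProj A f) n = A.indicator (⇑f) n := rfl

theorem Tlim_one : Tlim (constlp 1) = constlp 1 := by
  rw [Top_apply]
  congr 1
  exact limU_congr_of_mem (C := ‖constlp 1‖) (abs_apply_le _) Filter.univ_mem
    (fun n _ => rfl)

theorem Tlim_norm : ‖Tlim‖ = 1 := by
  refine le_antisymm Top_norm_le ?_
  have h := Tlim.le_opNorm (constlp 1)
  rw [Tlim_one, constlp_one_norm, mul_one] at h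
  exact h

/-- The paving lemma fails for operators on `ℓ∞`: there is a norm-one operator `T` on `ℓ∞`
vanishing on all the characteristic functions `1_{{n}}` such that for every finite
partition `{P i : i < l}` of `ℕ` some piece `P i` satisfies `‖P_{P i} T P_{P i}‖ = 1`. -/
theorem no_paving_for_linfty :
    ∃ T : lp (fun _ : ℕ => ℝ) ∞ →L[ℝ] lp (fun _ : ℕ => ℝ) ∞,
      ‖T‖ = 1 ∧ (∀ n : ℕ, T (lp.single ∞ n 1) = 0) ∧
        ∀ l : ℕ, ∀ P : Fin l → Set ℕ, (⋃ i, P i) = Set.univ →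
          Pairwise (Function.onFun Disjoint P) →
            ∃ i, ‖(linftyProj (P i)).comp (T.comp (linftyProj (P i)))‖ = 1 := by
  refine ⟨Tlim, Tlim_norm, ?_, ?_⟩
  · intro n
    have hA : ({n}ᶜ : Set ℕ) ∈ myU := by
      apply myU_le
      rw [Filter.mem_cofinite, compl_compl]
      exact Set.finite_singleton n
    have hlim : limU ⇑(lp.single ∞ n (1 : ℝ)) = 0 :=
      limU_congr_of_mem (abs_apply_le (lp.single ∞ n (1 : ℝ))) hA
        (fun k hk => lp.single_apply_ne ∞ n 1 hk)
    rw [Top_apply, hlim]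
    refine lp.ext ?_
    rw [lp.coeFn_zero]
    rfl
  · intro l P hcov _hdisj
    have hex : ∃ i, P i ∈ myU := by
      by_contra h
      push_neg at h
      have h' : ∀ i, (P i)ᶜ ∈ myU := fun i => Ultrafilter.compl_mem_iff_notMem.2 (h i)
      have hmem : (⋂ i, (P i)ᶜ) ∈ myU := (Filter.iInter_mem).2 h'
      rw [← Set.compl_iUnion, hcov, Set.compl_univ] at hmem
      exact Filter.empty_notMem (myU : Filter ℕ) hmem
    obtain ⟨i, hA⟩ := hex
    refine ⟨i, ?_⟩
    set A := P i with hAdef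
    set S := (linftyProj A).comp (Tlim.comp (linftyProj A)) with hS
    have hle : ‖S‖ ≤ 1 := by
      calc ‖S‖ ≤ ‖linftyProj A‖ * ‖Tlim.comp (linftyProj A)‖ :=
            ContinuousLinearMap.opNorm_comp_le _ _
        _ ≤ ‖linftyProj A‖ * (‖Tlim‖ * ‖linftyProj A‖) :=
            mul_le_mul_of_nonneg_left (ContinuousLinearMap.opNorm_comp_le _ _)
              (norm_nonneg _)
        _ ≤ 1 * (1 * 1) := by
            gcongr
            · exact linftyProj_norm_le A
            · exact Top_norm_le
            · exact linftyProj_norm_le A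
        _ = 1 := by ring
    set g := linftyProj A (constlp 1) with hg
    have hgA : ∀ k ∈ A, g k = 1 := by
      intro k hk
      show A.indicator (⇑(constlp 1)) k = 1
      rw [Set.indicator_of_mem hk]
      rfl
    have hTg : Tlim g = constlp 1 := by
      rw [Top_apply]
      congr 1
      exact limU_congr_of_mem (C := ‖g‖) (abs_apply_le _) hA hgA
    have hSg : S (constlp 1) = g := by
      rw [hS]
      simp only [ContinuousLinearMap.comp_apply]
      rw [← hg, hTg]
    have hgnorm : ‖g‖ = 1 := by
      refine le_antisymm ?_ ?_
      · have h1 := linftyRestrict_norm_le A (constlp 1)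
        rw [constlp_one_norm] at h1
        exact h1
      · obtain ⟨n, hn⟩ := Ultrafilter.nonempty_of_mem hA
        have h2 := abs_apply_le g n
        rw [hgA n hn, abs_one] at h2
        exact h2
    refine le_antisymm hle ?_
    have h3 := S.le_opNorm (constlp 1)
    rw [hSg, hgnorm, constlp_one_norm, mul_one] at h3
    exact h3
end
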